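/- arXiv:2309.06919 — 3 statements merged into one kernel-verified Lean document; each statement's English description precedes it below -/
import Mathlib

section
/- Let 0 < s₁ < s₂ < 1, 1 ≤ r ≤ p < ∞, Ω ⊆ ℝ^N a bounded open set with diam(Ω) < R, and A a bounded vector field on the convex hull of Ω. Then there exists a constant C = C(Ω, N, p, r) > 0 such that for every f ∈ L^p(Ω, ℂ), [f]_{W^{s₁,r}_A(Ω)}^r ≤ C / (s₂ - s₁)^{(p-r)/p} · [f]_{W^{s₂,p}_A(Ω)}^r. In particular W^{s₂,p}_A(Ω, ℂ) embeds continuously into W^{s₁,r}_A(Ω, ℂ). -/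
open MeasureTheory ENNReal NNReal Set
noncomputable section

abbrev Euc (N : ℕ) := EuclideanSpace ℝ (Fin N)

/-- The magnetic phase factor `e^{i (x-y)·A((x+y)/2)}`. -/
def phase {N : ℕ} (A : Euc N → Euc N) (x y : Euc N) : ℂ :=
  Complex.exp (Complex.I * ((inner ℝ (x - y) (A ((2:ℝ)⁻¹ • (x + y))) : ℝ) : ℂ))

/-- The magnetic difference `f(x) - e^{i(x-y)·A((x+y)/2)} f(y)`. -/
def mdiff {N : ℕ} (A : Euc N → Euc N) (f : Euc N → ℂ) (x y : Euc N) : ℂ :=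
  f x - phase A x y * f y

/-- Magnetic Gagliardo-type double integral over a set `H ⊆ ℝ^N × ℝ^N`. -/
def magJ {N : ℕ} (A : Euc N → Euc N) (f : Euc N → ℂ) (H : Set (Euc N × Euc N))
    (s p : ℝ) : ℝ≥0∞ :=
  ∫⁻ z in H, (‖mdiff A f z.1 z.2‖₊ : ℝ≥0∞) ^ p / (‖z.1 - z.2‖₊ : ℝ≥0∞) ^ ((N : ℝ) + s * p)

/-- Magnetic Gagliardo seminorm `[f]_{W^{s,p}_A(Ω)}`. -/
def magSemi {N : ℕ} (A : Euc N → Euc N) (f : Euc N → ℂ) (Ω : Set (Euc N)) (s p : ℝ) : ℝ≥0∞ :=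
  magJ A f (Ω ×ˢ Ω) s p ^ (1 / p)

/-- Gagliardo seminorm `[f]_{W^{s,p}(Ω)}` (the case `A ≡ 0`). -/
def gagSemi {N : ℕ} (f : Euc N → ℂ) (Ω : Set (Euc N)) (s p : ℝ) : ℝ≥0∞ :=
  magSemi (fun _ => (0 : Euc N)) f Ω s p

/-- Membership in the fractional Sobolev space `W^{s,p}(Ω, ℂ)`. -/
def memW {N : ℕ} (f : Euc N → ℂ) (Ω : Set (Euc N)) (s p : ℝ) : Prop :=
  MemLp f (ENNReal.ofReal p) (volume.restrict Ω) ∧ gagSemi f Ω s p < ∞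

/-- Full fractional Sobolev norm `‖f‖_{W^{s,p}(Ω)}`. -/
def normW {N : ℕ} (f : Euc N → ℂ) (Ω : Set (Euc N)) (s p : ℝ) : ℝ≥0∞ :=
  (eLpNorm f (ENNReal.ofReal p) (volume.restrict Ω) ^ p + gagSemi f Ω s p ^ p) ^ (1 / p)

/-- `Ω` has Lipschitz boundary: near any boundary point, `Ω` is the region above the
graph of a Lipschitz function in some direction `v`. -/
def HasLipschitzBoundary {N : ℕ} (Ω : Set (Euc N)) : Prop :=
  ∀ a ∈ frontier Ω, ∃ U : Set (Euc N), a ∈ U ∧ IsOpen U ∧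
    ∃ (v : Euc N) (φ : Euc N → ℝ) (L : ℝ≥0), ‖v‖ = 1 ∧ LipschitzWith L φ ∧
      (∀ x : Euc N, φ x = φ (x - (inner ℝ x v : ℝ) • v)) ∧
      Ω ∩ U = {x : Euc N | φ x < (inner ℝ x v : ℝ)} ∩ U

/-- The ground state energy `E^{p,q}_{s,A}`. -/
def energy {N : ℕ} (A : Euc N → Euc N) (Ω : Set (Euc N)) (s p : ℝ) (q : ℝ≥0∞) : ℝ≥0∞ :=
  ⨅ (f : Euc N → ℂ) (_ : memW f Ω s p)
    (_ : eLpNorm f q (volume.restrict Ω) ≠ 0),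
    magSemi A f Ω s p / eLpNorm f q (volume.restrict Ω)

/-- The ground state manifold `M^{p,q}_{s,A}`. -/
def ground {N : ℕ} (A : Euc N → Euc N) (Ω : Set (Euc N)) (s p : ℝ) (q : ℝ≥0∞) :
    Set (Euc N → ℂ) :=
  {f | memW f Ω s p ∧ eLpNorm f q (volume.restrict Ω) ≠ 0 ∧
    magSemi A f Ω s p / eLpNorm f q (volume.restrict Ω) = energy A Ω s p q}

/-- `L^q` distance to the ground state manifold, `d^q_{s,A}(f)`. -/
def gdist {N : ℕ} (A : Euc N → Euc N) (Ω : Set (Euc N)) (s p : ℝ) (q : ℝ≥0∞)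
    (f : Euc N → ℂ) : ℝ≥0∞ :=
  ⨅ (φ : Euc N → ℂ) (_ : φ ∈ ground A Ω s p q),
    eLpNorm (f - φ) q (volume.restrict Ω)

lemma mdiff_self {N : ℕ} (A : Euc N → Euc N) (f : Euc N → ℂ) (x : Euc N) :
    mdiff A f x x = 0 := by
  simp [mdiff, phase]

/-- Young-type inequality in `ℝ≥0∞`. -/
lemma young {θ : ℝ} (hθ : 0 < θ) (hθ1 : θ < 1) (a b t : ℝ≥0∞) (ht : t ≠ 0) (ht' : t ≠ ⊤) :
    a ^ θ * b ≤ a * t + b ^ (1/(1-θ)) * t ^ (-(θ/(1-θ))) := by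
  have h1θ : (1:ℝ) - θ ≠ 0 := by linarith
  set x := a * t with hx
  set y := (b * t ^ (-θ)) ^ (1/(1-θ)) with hy
  have hyval : y ^ (1-θ) = b * t ^ (-θ) := by
    rw [hy, ← ENNReal.rpow_mul]
    rw [show (1/(1-θ)) * (1-θ) = 1 by field_simp]
    exact ENNReal.rpow_one _
  have key : x ^ θ * y ^ (1-θ) = a ^ θ * b := by
    rw [hx, ENNReal.mul_rpow_of_nonneg _ _ hθ.le, hyval]
    have : t ^ θ * (b * t ^ (-θ)) = b * (t ^ θ * t ^ (-θ)) := by ring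
    rw [mul_assoc, this, ← ENNReal.rpow_add _ _ ht ht']
    simp
  have hxy : x ^ θ * y ^ (1-θ) ≤ x + y := by
    rcases eq_or_ne (x + y) 0 with h0 | h0
    · rcases add_eq_zero.mp h0 with ⟨hx0, hy0⟩
      simp [hx0, ENNReal.zero_rpow_of_pos hθ]
    rcases eq_or_ne (x + y) ⊤ with hT | hT
    · rw [hT]; exact le_top
    have h1 : x ^ θ ≤ (x+y) ^ θ := ENNReal.rpow_le_rpow le_self_add hθ.le
    have h2 : y ^ (1-θ) ≤ (x+y) ^ (1-θ) := ENNReal.rpow_le_rpow le_add_self (by linarith)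
    calc x ^ θ * y ^ (1-θ) ≤ (x+y) ^ θ * (x+y) ^ (1-θ) := mul_le_mul' h1 h2
      _ = (x+y) ^ (θ + (1-θ)) := (ENNReal.rpow_add _ _ h0 hT).symm
      _ = x + y := by norm_num
  have hyle : y = b ^ (1/(1-θ)) * t ^ (-(θ/(1-θ))) := by
    rw [hy, ENNReal.mul_rpow_of_nonneg _ _ (one_div_nonneg.mpr (by linarith)), ← ENNReal.rpow_mul]
    congr 1
    field_simp
  calc a ^ θ * b = x ^ θ * y ^ (1-θ) := key.symm
    _ ≤ x + y := hxy
    _ = a * t + b ^ (1/(1-θ)) * t ^ (-(θ/(1-θ))) := by rw [hyle]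

/-- Pointwise splitting of the Gagliardo integrand. -/
lemma split_eq (a c : ℝ≥0∞) (ha : a ≠ ⊤) (hc : c ≠ ⊤) (hc0 : c = 0 → a = 0)
    {θ NN s₁ s₂ r p : ℝ} (hr : 0 < r) (hp : 0 < p) (hθ : θ = r / p) :
    a ^ r / c ^ (NN + s₁*r) =
      (a ^ p / c ^ (NN + s₂*p)) ^ θ * c ^ ((NN + s₂*p)*θ - (NN + s₁*r)) := by
  have hθpos : 0 < θ := by rw [hθ]; positivity
  rcases eq_or_ne c 0 with rfl | hcne
  · rw [hc0 rfl, ENNReal.zero_rpow_of_pos hr, ENNReal.zero_rpow_of_pos hp,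
      ENNReal.zero_div, ENNReal.zero_div, ENNReal.zero_rpow_of_pos hθpos, zero_mul]
  · have hpθ : p * θ = r := by rw [hθ]; field_simp
    have hXne : c ^ ((NN + s₂*p)*θ) ≠ 0 := by
      simp [ENNReal.rpow_eq_zero_iff, hcne, hc]
    have hXnt : c ^ ((NN + s₂*p)*θ) ≠ ⊤ := by
      simp [ENNReal.rpow_eq_top_iff, hcne, hc]
    rw [ENNReal.div_rpow_of_nonneg _ _ hθpos.le, ← ENNReal.rpow_mul, ← ENNReal.rpow_mul, hpθ]
    rw [div_eq_mul_inv, div_eq_mul_inv, mul_assoc]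
    congr 1
    have e1 : c ^ ((NN + s₂*p)*θ - (NN + s₁*r))
        = c ^ ((NN + s₂*p)*θ) * (c ^ (NN + s₁*r))⁻¹ := by
      rw [← ENNReal.rpow_neg, ← ENNReal.rpow_add _ _ hcne hc]
      ring_nf
    rw [e1, ← mul_assoc, ENNReal.inv_mul_cancel hXne hXnt, one_mul]

lemma prod_strip_le {N : ℕ} (Ω : Set (Euc N)) (hΩ : MeasurableSet Ω) (r' : ℝ) :
    volume ((Ω ×ˢ (univ : Set (Euc N))) ∩ {z : Euc N × Euc N | dist z.1 z.2 < r'})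
      ≤ volume Ω * volume (Metric.ball (0 : Euc N) r') := by
  have hS : MeasurableSet ((Ω ×ˢ (univ : Set (Euc N))) ∩ {z : Euc N × Euc N | dist z.1 z.2 < r'}) :=
    (hΩ.prod MeasurableSet.univ).inter (isOpen_lt (by fun_prop) continuous_const).measurableSet
  rw [Measure.volume_eq_prod, Measure.prod_apply hS]
  have hsec : ∀ x : Euc N,
      volume (Prod.mk x ⁻¹' ((Ω ×ˢ (univ : Set (Euc N))) ∩ {z : Euc N × Euc N | dist z.1 z.2 < r'}))
        = Ω.indicator (fun _ => volume (Metric.ball (0 : Euc N) r')) x := by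
    intro x
    by_cases hx : x ∈ Ω
    · have : Prod.mk x ⁻¹' ((Ω ×ˢ (univ : Set (Euc N))) ∩ {z : Euc N × Euc N | dist z.1 z.2 < r'})
          = Metric.ball x r' := by
        ext y; simp [hx, Metric.mem_ball, dist_comm]
      rw [this, Set.indicator_of_mem hx, Measure.addHaar_ball_center]
    · have : Prod.mk x ⁻¹' ((Ω ×ˢ (univ : Set (Euc N))) ∩ {z : Euc N × Euc N | dist z.1 z.2 < r'})
          = ∅ := by
        ext y; simp [hx]
      rw [this, Set.indicator_of_notMem hx]
      simp
  calc ∫⁻ x, volume (Prod.mk x ⁻¹' ((Ω ×ˢ (univ : Set (Euc N))) ∩ {z : Euc N × Euc N | dist z.1 z.2 < r'}))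
        = ∫⁻ x, Ω.indicator (fun _ => volume (Metric.ball (0 : Euc N) r')) x := by
          simp_rw [hsec]
    _ = ∫⁻ _ in Ω, volume (Metric.ball (0 : Euc N) r') := lintegral_indicator hΩ _
    _ = volume (Metric.ball (0 : Euc N) r') * volume Ω := by
          rw [setLIntegral_const]
    _ = volume Ω * volume (Metric.ball (0 : Euc N) r') := mul_comm _ _
    _ ≤ volume Ω * volume (Metric.ball (0 : Euc N) r') := le_rfl

lemma U_lt_top {N : ℕ} (Ω : Set (Euc N)) (hΩm : MeasurableSet Ω) (hΩb : Bornology.IsBounded Ω)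
    {R β : ℝ} (hR : Metric.diam Ω < R) (hβ : -(N:ℝ) < β) :
    ∫⁻ z in Ω ×ˢ Ω, ((‖z.1 - z.2‖₊ : ℝ≥0∞)) ^ β < ⊤ := by
  have hR0 : 0 < R := lt_of_le_of_lt Metric.diam_nonneg hR
  have hΩfin : volume Ω < ⊤ := hΩb.measure_lt_top
  have hmΩΩ : MeasurableSet (Ω ×ˢ Ω) := hΩm.prod hΩm
  by_cases hβ0 : 0 ≤ β
  · have hb : ∀ᵐ z ∂(volume.restrict (Ω ×ˢ Ω)),
        ((‖z.1 - z.2‖₊ : ℝ≥0∞)) ^ β ≤ ENNReal.ofReal (R ^ β) := by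
      filter_upwards [self_mem_ae_restrict hmΩΩ] with z hz
      have h1 : ‖z.1 - z.2‖ ≤ R := by
        have := Metric.dist_le_diam_of_mem hΩb hz.1 hz.2
        rw [dist_eq_norm] at this; linarith
      have h2 : ((‖z.1 - z.2‖₊ : ℝ≥0∞)) ≤ ENNReal.ofReal R := by
        rw [← ENNReal.ofReal_coe_nnreal, coe_nnnorm]
        exact ENNReal.ofReal_le_ofReal h1
      calc ((‖z.1 - z.2‖₊ : ℝ≥0∞)) ^ β ≤ (ENNReal.ofReal R) ^ β := ENNReal.rpow_le_rpow h2 hβ0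
        _ = ENNReal.ofReal (R ^ β) := ENNReal.ofReal_rpow_of_pos hR0
    calc ∫⁻ z in Ω ×ˢ Ω, ((‖z.1 - z.2‖₊ : ℝ≥0∞)) ^ β
        ≤ ∫⁻ _ in Ω ×ˢ Ω, ENNReal.ofReal (R ^ β) := lintegral_mono_ae hb
      _ = ENNReal.ofReal (R ^ β) * volume (Ω ×ˢ Ω) := setLIntegral_const _ _
      _ < ⊤ := by
          rw [Measure.volume_eq_prod, Measure.prod_prod]
          exact ENNReal.mul_lt_top ENNReal.ofReal_lt_top (ENNReal.mul_lt_top hΩfin hΩfin)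
  · push_neg at hβ0
    have hN0 : 0 < N := by
      rcases Nat.eq_zero_or_pos N with h0 | h0
      · exfalso; rw [h0] at hβ; norm_num at hβ; linarith
      · exact h0
    haveI : Nontrivial (Euc N) := by
      have : 0 < Module.finrank ℝ (Euc N) := by rw [finrank_euclideanSpace_fin]; exact hN0
      exact Module.nontrivial_of_finrank_pos this
    set c : ℕ → ℝ := fun n => R / 2 ^ n with hc
    have hcpos : ∀ n, 0 < c n := fun n => div_pos hR0 (by positivity)
    have hstep : ∀ m, c (m+1) = c m * (1/2) := by
      intro m; simp only [hc]; rw [pow_succ]; ring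
    set Sn : ℕ → Set (Euc N × Euc N) := fun n =>
      (Ω ×ˢ (univ : Set (Euc N))) ∩ {z | dist z.1 z.2 < c n ∧ c (n+1) ≤ dist z.1 z.2} with hSndef
    have hSn : ∀ n, MeasurableSet (Sn n) := by
      intro n
      refine (hΩm.prod MeasurableSet.univ).inter ?_
      have h1 : MeasurableSet {z : Euc N × Euc N | dist z.1 z.2 < c n} :=
        (isOpen_lt (by fun_prop) continuous_const).measurableSet
      have h2 : MeasurableSet {z : Euc N × Euc N | c (n+1) ≤ dist z.1 z.2} :=
        (isClosed_le continuous_const (by fun_prop)).measurableSet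
      exact (h1.inter h2).congr (by ext z; simp [and_comm]) |>.congr rfl
    have cover : Ω ×ˢ Ω ⊆ {z : Euc N × Euc N | z.1 = z.2} ∪ ⋃ n, Sn n := by
      rintro z hz
      by_cases hd : z.1 = z.2
      · exact Or.inl hd
      right
      set d := dist z.1 z.2 with hdd
      have hd0 : 0 < d := dist_pos.mpr hd
      have hdR : d < R := lt_of_le_of_lt (Metric.dist_le_diam_of_mem hΩb hz.1 hz.2) hR
      have hcR : ∀ m, c m = R * (1/2) ^ m := by
        intro m; simp only [hc]; rw [div_eq_mul_inv, one_div, inv_pow]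
      have hex : ∃ n, c (n+1) ≤ d := by
        obtain ⟨m, hm⟩ := exists_pow_lt_of_lt_one (div_pos hd0 hR0) (by norm_num : (1:ℝ)/2 < 1)
        rw [lt_div_iff₀ hR0] at hm
        refine ⟨m, ?_⟩
        rw [hcR, pow_succ]
        nlinarith [hm, hd0, pow_pos (show (0:ℝ) < 1/2 by norm_num) m]
      obtain ⟨n, hn1, hn2⟩ : ∃ n, c (n+1) ≤ d ∧ d < c n := by
        refine ⟨Nat.find hex, Nat.find_spec hex, ?_⟩
        rcases Nat.eq_zero_or_pos (Nat.find hex) with h0 | h0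
        · rw [h0]; simpa [hc] using hdR
        · have hmin := Nat.find_min hex (Nat.sub_lt h0 one_pos)
          push_neg at hmin
          have heq : Nat.find hex - 1 + 1 = Nat.find hex := by omega
          rwa [heq] at hmin
      exact mem_iUnion.mpr ⟨n, ⟨⟨hz.1, trivial⟩, hn2, hn1⟩⟩
    have hdiag : volume {z : Euc N × Euc N | z.1 = z.2} = 0 := by
      have hm : MeasurableSet {z : Euc N × Euc N | z.1 = z.2} :=
        (isClosed_eq continuous_fst continuous_snd).measurableSet
      rw [Measure.volume_eq_prod, Measure.prod_apply hm]
      have : ∀ x : Euc N, (volume (Prod.mk x ⁻¹' {z : Euc N × Euc N | z.1 = z.2})) = 0 := by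
        intro x
        have : Prod.mk x ⁻¹' {z : Euc N × Euc N | z.1 = z.2} = {x} := by
          ext y; simp [eq_comm]
        rw [this, measure_singleton]
      simp_rw [this, lintegral_zero]
    set B := volume (Metric.ball (0 : Euc N) 1) with hB
    have hBfin : B < ⊤ := measure_ball_lt_top
    have bound : ∀ n, ∫⁻ z in Sn n, ((‖z.1 - z.2‖₊ : ℝ≥0∞)) ^ β
        ≤ (volume Ω * B) * ENNReal.ofReal (c (n+1) ^ β * c n ^ (N:ℝ)) := by
      intro n
      have hpt : ∀ᵐ z ∂(volume.restrict (Sn n)),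
          ((‖z.1 - z.2‖₊ : ℝ≥0∞)) ^ β ≤ ENNReal.ofReal (c (n+1) ^ β) := by
        filter_upwards [self_mem_ae_restrict (hSn n)] with z hz
        have h2 : ENNReal.ofReal (c (n+1)) ≤ ((‖z.1 - z.2‖₊ : ℝ≥0∞)) := by
          rw [← ENNReal.ofReal_coe_nnreal, coe_nnnorm]
          exact ENNReal.ofReal_le_ofReal (by rw [← dist_eq_norm]; exact hz.2.2)
        have h3 : ((‖z.1 - z.2‖₊ : ℝ≥0∞)) ^ β ≤ (ENNReal.ofReal (c (n+1))) ^ β := by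
          have hh : (ENNReal.ofReal (c (n+1))) ^ (-β) ≤ ((‖z.1 - z.2‖₊ : ℝ≥0∞)) ^ (-β) :=
            ENNReal.rpow_le_rpow h2 (neg_nonneg.mpr hβ0.le)
          calc ((‖z.1 - z.2‖₊ : ℝ≥0∞)) ^ β = (((‖z.1 - z.2‖₊ : ℝ≥0∞)) ^ (-β))⁻¹ := by
                rw [← ENNReal.rpow_neg, neg_neg]
            _ ≤ ((ENNReal.ofReal (c (n+1))) ^ (-β))⁻¹ := ENNReal.inv_le_inv.mpr hh
            _ = (ENNReal.ofReal (c (n+1))) ^ β := by rw [← ENNReal.rpow_neg, neg_neg]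
        calc ((‖z.1 - z.2‖₊ : ℝ≥0∞)) ^ β ≤ (ENNReal.ofReal (c (n+1))) ^ β := h3
          _ = ENNReal.ofReal (c (n+1) ^ β) := ENNReal.ofReal_rpow_of_pos (hcpos _)
      have hvol : volume (Sn n) ≤ volume Ω * (ENNReal.ofReal (c n ^ (N:ℕ)) * B) := by
        have hsub : Sn n ⊆ (Ω ×ˢ (univ : Set (Euc N))) ∩ {z : Euc N × Euc N | dist z.1 z.2 < c n} := by
          rintro z ⟨hz1, hz2, _⟩; exact ⟨hz1, hz2⟩
        calc volume (Sn n) ≤ volume ((Ω ×ˢ (univ : Set (Euc N))) ∩ {z : Euc N × Euc N | dist z.1 z.2 < c n}) :=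
              measure_mono hsub
          _ ≤ volume Ω * volume (Metric.ball (0 : Euc N) (c n)) := prod_strip_le Ω hΩm (c n)
          _ = volume Ω * (ENNReal.ofReal (c n ^ (N:ℕ)) * B) := by
              rw [Measure.addHaar_ball volume 0 (hcpos n).le, finrank_euclideanSpace_fin]
      calc ∫⁻ z in Sn n, ((‖z.1 - z.2‖₊ : ℝ≥0∞)) ^ β
          ≤ ∫⁻ _ in Sn n, ENNReal.ofReal (c (n+1) ^ β) := lintegral_mono_ae hpt
        _ = ENNReal.ofReal (c (n+1) ^ β) * volume (Sn n) := setLIntegral_const _ _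
        _ ≤ ENNReal.ofReal (c (n+1) ^ β) * (volume Ω * (ENNReal.ofReal (c n ^ (N:ℕ)) * B)) := by
            exact mul_le_mul_right hvol _
        _ = (volume Ω * B) * ENNReal.ofReal (c (n+1) ^ β * c n ^ (N:ℝ)) := by
            rw [ENNReal.ofReal_mul (by positivity : (0:ℝ) ≤ c (n+1) ^ β)]
            rw [show c n ^ (N:ℝ) = c n ^ (N:ℕ) from Real.rpow_natCast _ N]
            ring
    set w : ℝ := (1/2 : ℝ) ^ ((N:ℝ) + β) with hw
    have hw0 : 0 ≤ w := by positivity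
    have hw1 : w < 1 := Real.rpow_lt_one (by norm_num) (by norm_num) (by linarith)
    set u : ℕ → ℝ := fun n => c (n+1) ^ β * c n ^ (N:ℝ) with hu
    have hugeom : ∀ n, u n = u 0 * w ^ n := by
      intro n
      induction n with
      | zero => simp
      | succ k ih =>
        have h1 : u (k+1) = u k * w := by
          have e1 : c (k+1+1) ^ β = c (k+1) ^ β * (1/2) ^ β := by
            rw [hstep (k+1), Real.mul_rpow (hcpos _).le (by norm_num)]
          have e2 : c (k+1) ^ (N:ℝ) = c k ^ (N:ℝ) * (1/2) ^ (N:ℝ) := by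
            rw [hstep k, Real.mul_rpow (hcpos _).le (by norm_num)]
          simp only [hu]
          rw [e1, e2, hw, Real.rpow_add (by norm_num : (0:ℝ) < 1/2)]
          ring
        rw [h1, ih, pow_succ]; ring
    have hsum : ∑' n, ENNReal.ofReal (u n) < ⊤ := by
      have : ∀ n, ENNReal.ofReal (u n) = ENNReal.ofReal (u 0) * (ENNReal.ofReal w) ^ n := by
        intro n
        rw [hugeom n, ENNReal.ofReal_mul (by positivity : (0:ℝ) ≤ u 0), ENNReal.ofReal_pow hw0]
      rw [tsum_congr this, ENNReal.tsum_mul_left, ENNReal.tsum_geometric]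
      refine ENNReal.mul_lt_top ENNReal.ofReal_lt_top ?_
      rw [ENNReal.inv_lt_top]
      exact tsub_pos_iff_lt.mpr (ENNReal.ofReal_lt_one.mpr hw1)
    calc ∫⁻ z in Ω ×ˢ Ω, ((‖z.1 - z.2‖₊ : ℝ≥0∞)) ^ β
        ≤ ∫⁻ z in {z : Euc N × Euc N | z.1 = z.2} ∪ ⋃ n, Sn n, ((‖z.1 - z.2‖₊ : ℝ≥0∞)) ^ β :=
          lintegral_mono_set cover
      _ ≤ (∫⁻ z in {z : Euc N × Euc N | z.1 = z.2}, ((‖z.1 - z.2‖₊ : ℝ≥0∞)) ^ β)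
            + ∫⁻ z in ⋃ n, Sn n, ((‖z.1 - z.2‖₊ : ℝ≥0∞)) ^ β := lintegral_union_le _ _ _
      _ ≤ 0 + ∑' n, ∫⁻ z in Sn n, ((‖z.1 - z.2‖₊ : ℝ≥0∞)) ^ β := by
          gcongr
          · exact le_of_eq (setLIntegral_measure_zero _ _ hdiag)
          · exact lintegral_iUnion_le _ _
      _ ≤ 0 + ∑' n, (volume Ω * B) * ENNReal.ofReal (c (n+1) ^ β * c n ^ (N:ℝ)) := by
          gcongr with n
          exact bound n
      _ = (volume Ω * B) * ∑' n, ENNReal.ofReal (u n) := by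
          rw [zero_add, ENNReal.tsum_mul_left]
      _ < ⊤ := ENNReal.mul_lt_top (ENNReal.mul_lt_top hΩfin hBfin) hsum

/-- continuous embedding `W^{s₂,p}_A(Ω) ↪ W^{s₁,r}_A(Ω)` on a bounded set. -/
theorem stmt_1 {N : ℕ} (Ω : Set (Euc N)) (hΩo : IsOpen Ω)
    (hΩb : Bornology.IsBounded Ω) (R : ℝ) (hR : Metric.diam Ω < R)
    (A : Euc N → Euc N) (MA : ℝ) (hA : ∀ x ∈ convexHull ℝ Ω, ‖A x‖ ≤ MA)
    (s₁ s₂ r p : ℝ) (hs₁ : 0 < s₁) (hs₁₂ : s₁ < s₂) (hs₂ : s₂ < 1)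
    (hr : 1 ≤ r) (hrp : r ≤ p) :
    ∃ C : ℝ, 0 < C ∧
      (∀ f : Euc N → ℂ, MemLp f (ENNReal.ofReal p) (volume.restrict Ω) →
        magSemi A f Ω s₁ r ^ r ≤
          ENNReal.ofReal (C / (s₂ - s₁) ^ ((p - r) / p)) * magSemi A f Ω s₂ p ^ r) ∧
      (∀ f : Euc N → ℂ, MemLp f (ENNReal.ofReal p) (volume.restrict Ω) →
        magSemi A f Ω s₂ p < ∞ → magSemi A f Ω s₁ r < ∞) := by
  have hr0 : (0:ℝ) < r := lt_of_lt_of_le one_pos hr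
  have hp0 : (0:ℝ) < p := lt_of_lt_of_le hr0 hrp
  have hΩm : MeasurableSet Ω := hΩo.measurableSet
  have hmΩΩ : MeasurableSet (Ω ×ˢ Ω) := hΩm.prod hΩm
  have hs21 : (0:ℝ) < s₂ - s₁ := by linarith
  have hR0 : 0 < R := lt_of_le_of_lt Metric.diam_nonneg hR
  have e1 : ∀ f : Euc N → ℂ, magSemi A f Ω s₁ r ^ r = magJ A f (Ω ×ˢ Ω) s₁ r := by
    intro f
    rw [magSemi, ← ENNReal.rpow_mul, one_div, inv_mul_cancel₀ hr0.ne', ENNReal.rpow_one]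
  have e2 : ∀ f : Euc N → ℂ, magSemi A f Ω s₂ p ^ r = magJ A f (Ω ×ˢ Ω) s₂ p ^ (r/p) := by
    intro f
    rw [magSemi, ← ENNReal.rpow_mul]
    congr 1
    ring
  have hsplit : ∀ (f : Euc N → ℂ) (z : Euc N × Euc N),
      (‖mdiff A f z.1 z.2‖₊ : ℝ≥0∞) ^ r / (‖z.1 - z.2‖₊ : ℝ≥0∞) ^ ((N:ℝ) + s₁*r)
      = ((‖mdiff A f z.1 z.2‖₊ : ℝ≥0∞) ^ p / (‖z.1 - z.2‖₊ : ℝ≥0∞) ^ ((N:ℝ) + s₂*p)) ^ (r/p)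
        * (‖z.1 - z.2‖₊ : ℝ≥0∞) ^ (((N:ℝ) + s₂*p)*(r/p) - ((N:ℝ) + s₁*r)) := by
    intro f z
    refine split_eq _ _ coe_ne_top coe_ne_top ?_ hr0 hp0 rfl
    intro hzz
    rw [ENNReal.coe_eq_zero, nnnorm_eq_zero] at hzz
    have hz12 : z.1 = z.2 := sub_eq_zero.mp hzz
    rw [hz12, mdiff_self]
    simp
  -- packaging step
  have pack : ∀ C' : ℝ, 0 < C' →
      (∀ f : Euc N → ℂ, magSemi A f Ω s₁ r ^ r ≤ ENNReal.ofReal C' * magSemi A f Ω s₂ p ^ r) →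
      (∃ C : ℝ, 0 < C ∧
        (∀ f : Euc N → ℂ, MemLp f (ENNReal.ofReal p) (volume.restrict Ω) →
          magSemi A f Ω s₁ r ^ r ≤
            ENNReal.ofReal (C / (s₂ - s₁) ^ ((p - r) / p)) * magSemi A f Ω s₂ p ^ r) ∧
        (∀ f : Euc N → ℂ, MemLp f (ENNReal.ofReal p) (volume.restrict Ω) →
          magSemi A f Ω s₂ p < ∞ → magSemi A f Ω s₁ r < ∞)) := by
    intro C' hC' key
    refine ⟨C' * (s₂ - s₁) ^ ((p - r)/p),
      mul_pos hC' (Real.rpow_pos_of_pos hs21 _), ?_, ?_⟩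
    · intro f _
      rw [mul_div_cancel_right₀ C' (ne_of_gt (Real.rpow_pos_of_pos hs21 _))]
      exact key f
    · intro f _ hfin
      have h1 := key f
      by_contra hcon
      rw [not_lt, top_le_iff] at hcon
      rw [hcon, ENNReal.top_rpow_of_pos hr0, top_le_iff] at h1
      have hfin2 : ENNReal.ofReal C' * magSemi A f Ω s₂ p ^ r < ⊤ :=
        ENNReal.mul_lt_top ENNReal.ofReal_lt_top (ENNReal.rpow_lt_top_of_nonneg hr0.le hfin.ne)
      exact hfin2.ne h1
  rcases eq_or_lt_of_le hrp with heq | hlt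
  · -- case r = p
    subst heq
    refine pack ((max R 1) ^ r)
      (Real.rpow_pos_of_pos (lt_of_lt_of_le one_pos (le_max_right R 1)) _) ?_
    intro f
    rw [e1 f, e2 f, div_self hr0.ne', ENNReal.rpow_one]
    have hpt : ∀ᵐ z ∂(volume.restrict (Ω ×ˢ Ω)),
        (‖mdiff A f z.1 z.2‖₊ : ℝ≥0∞) ^ r / (‖z.1 - z.2‖₊ : ℝ≥0∞) ^ ((N:ℝ) + s₁*r)
          ≤ ENNReal.ofReal ((max R 1) ^ r) *
            ((‖mdiff A f z.1 z.2‖₊ : ℝ≥0∞) ^ r / (‖z.1 - z.2‖₊ : ℝ≥0∞) ^ ((N:ℝ) + s₂*r)) := by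
      filter_upwards [self_mem_ae_restrict hmΩΩ] with z hz
      rw [hsplit f z, div_self hr0.ne', ENNReal.rpow_one]
      have hnm : ((‖z.1 - z.2‖₊ : ℝ≥0∞)) ≤ ENNReal.ofReal (max R 1) := by
        rw [← ENNReal.ofReal_coe_nnreal, coe_nnnorm]
        refine ENNReal.ofReal_le_ofReal ?_
        have hd := Metric.dist_le_diam_of_mem hΩb hz.1 hz.2
        rw [dist_eq_norm] at hd
        calc ‖z.1 - z.2‖ ≤ Metric.diam Ω := hd
          _ ≤ R := hR.le
          _ ≤ max R 1 := le_max_left _ _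
      have hb : ((‖z.1 - z.2‖₊ : ℝ≥0∞)) ^ (((N:ℝ) + s₂*r)*1 - ((N:ℝ) + s₁*r))
          ≤ ENNReal.ofReal ((max R 1) ^ r) := by
        rw [show ((N:ℝ) + s₂*r)*1 - ((N:ℝ) + s₁*r) = (s₂ - s₁)*r by ring]
        calc ((‖z.1 - z.2‖₊ : ℝ≥0∞)) ^ ((s₂ - s₁)*r)
            ≤ (ENNReal.ofReal (max R 1)) ^ ((s₂ - s₁)*r) :=
              ENNReal.rpow_le_rpow hnm (by positivity)
          _ = ENNReal.ofReal ((max R 1) ^ ((s₂ - s₁)*r)) :=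
              ENNReal.ofReal_rpow_of_pos (lt_of_lt_of_le one_pos (le_max_right R 1))
          _ ≤ ENNReal.ofReal ((max R 1) ^ r) := by
              refine ENNReal.ofReal_le_ofReal ?_
              refine Real.rpow_le_rpow_of_exponent_le (le_max_right R 1) ?_
              nlinarith
      exact le_of_le_of_eq (mul_le_mul_right hb _) (mul_comm _ _)
    calc magJ A f (Ω ×ˢ Ω) s₁ r
        ≤ ∫⁻ z in Ω ×ˢ Ω, ENNReal.ofReal ((max R 1) ^ r) *
            ((‖mdiff A f z.1 z.2‖₊ : ℝ≥0∞) ^ r / (‖z.1 - z.2‖₊ : ℝ≥0∞) ^ ((N:ℝ) + s₂*r)) :=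
          lintegral_mono_ae hpt
      _ = ENNReal.ofReal ((max R 1) ^ r) * magJ A f (Ω ×ˢ Ω) s₂ r :=
          lintegral_const_mul' _ _ ENNReal.ofReal_ne_top
  · -- case r < p
    set θ : ℝ := r / p with hθdef
    have hθ0 : 0 < θ := div_pos hr0 hp0
    have hθ1 : θ < 1 := (div_lt_one hp0).mpr hlt
    have h1θ : (0:ℝ) < 1 - θ := by linarith
    set γ : ℝ := ((N:ℝ) + s₂*p)*θ - ((N:ℝ) + s₁*r) with hγdef
    set β : ℝ := γ / (1 - θ) with hβdef
    have hγβ : γ * (1/(1-θ)) = β := by rw [hβdef]; field_simp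
    have hγeq : γ = (s₂ - s₁)*r - (N:ℝ)*(1-θ) := by
      rw [hγdef, hθdef]; field_simp; ring
    have hβN : -(N:ℝ) < β := by
      rw [hβdef, lt_div_iff₀ h1θ, hγeq]
      have := mul_pos hs21 hr0
      nlinarith
    set U := ∫⁻ z in Ω ×ˢ Ω, ((‖z.1 - z.2‖₊ : ℝ≥0∞)) ^ β with hUdef
    have hU : U < ⊤ := U_lt_top Ω hΩm hΩb hR hβN
    refine pack (1 + U.toReal) (by positivity) ?_
    intro f
    rw [e1 f, e2 f]
    set H := magJ A f (Ω ×ˢ Ω) s₂ p with hHdef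
    have hT : ∀ t : ℝ≥0∞, t ≠ 0 → t ≠ ⊤ →
        magJ A f (Ω ×ˢ Ω) s₁ r ≤ t * H + t ^ (-(θ/(1-θ))) * U := by
      intro t ht ht'
      have htm : t ^ (-(θ/(1-θ))) ≠ ⊤ := by
        simp [ENNReal.rpow_eq_top_iff, ht, ht']
      have hcont : Continuous (fun z : Euc N × Euc N => ((‖z.1 - z.2‖₊ : ℝ≥0∞))) :=
        ENNReal.continuous_coe.comp ((continuous_fst.sub continuous_snd).nnnorm)
      have hmF : Measurable (fun z : Euc N × Euc N =>
          t ^ (-(θ/(1-θ))) * ((‖z.1 - z.2‖₊ : ℝ≥0∞)) ^ β) :=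
        ((ENNReal.continuous_rpow_const.comp hcont).measurable).const_mul _
      have hpt : ∀ z : Euc N × Euc N,
          (‖mdiff A f z.1 z.2‖₊ : ℝ≥0∞) ^ r / (‖z.1 - z.2‖₊ : ℝ≥0∞) ^ ((N:ℝ) + s₁*r)
          ≤ t ^ (-(θ/(1-θ))) * ((‖z.1 - z.2‖₊ : ℝ≥0∞)) ^ β
            + t * ((‖mdiff A f z.1 z.2‖₊ : ℝ≥0∞) ^ p / (‖z.1 - z.2‖₊ : ℝ≥0∞) ^ ((N:ℝ) + s₂*p)) := by
        intro z
        rw [hsplit f z]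
        refine le_trans (young hθ0 hθ1 _ _ t ht ht') ?_
        rw [← ENNReal.rpow_mul, hγβ]
        rw [mul_comm _ t, mul_comm _ (t ^ (-(θ/(1-θ)))), add_comm]
      have hlin : ∫⁻ z in Ω ×ˢ Ω, (t ^ (-(θ/(1-θ))) * ((‖z.1 - z.2‖₊ : ℝ≥0∞)) ^ β
              + t * ((‖mdiff A f z.1 z.2‖₊ : ℝ≥0∞) ^ p / (‖z.1 - z.2‖₊ : ℝ≥0∞) ^ ((N:ℝ) + s₂*p)))
          = t ^ (-(θ/(1-θ))) * U + t * H := by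
        rw [lintegral_add_left hmF, lintegral_const_mul' _ _ htm, lintegral_const_mul' _ _ ht']
        rfl
      calc magJ A f (Ω ×ˢ Ω) s₁ r
          ≤ ∫⁻ z in Ω ×ˢ Ω, (t ^ (-(θ/(1-θ))) * ((‖z.1 - z.2‖₊ : ℝ≥0∞)) ^ β
              + t * ((‖mdiff A f z.1 z.2‖₊ : ℝ≥0∞) ^ p / (‖z.1 - z.2‖₊ : ℝ≥0∞) ^ ((N:ℝ) + s₂*p))) :=
            lintegral_mono hpt
        _ = t ^ (-(θ/(1-θ))) * U + t * H := hlin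
        _ = t * H + t ^ (-(θ/(1-θ))) * U := add_comm _ _
    rcases eq_or_ne H 0 with hH0 | hH0
    · rw [hH0, ENNReal.zero_rpow_of_pos hθ0, mul_zero]
      apply ENNReal.le_of_forall_pos_le_add
      intro ε hε _
      rw [zero_add]
      rcases eq_or_ne U 0 with hU0 | hU0
      · have h := hT 1 one_ne_zero ENNReal.one_ne_top
        rw [hH0, hU0, mul_zero, mul_zero, add_zero] at h
        exact h.trans (zero_le)
      · have hmne : -(θ/(1-θ)) ≠ 0 := neg_ne_zero.mpr (ne_of_gt (div_pos hθ0 h1θ))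
        have hεne : ((ε:ℝ≥0∞)) ≠ 0 := ENNReal.coe_ne_zero.mpr hε.ne'
        have hd0 : ((ε:ℝ≥0∞))/U ≠ 0 := by
          simp [ENNReal.div_eq_zero_iff, hεne, hU.ne]
        have hdT : ((ε:ℝ≥0∞))/U ≠ ⊤ := by
          simp [ENNReal.div_eq_top, hεne, hU0]
        have ht0 : (((ε:ℝ≥0∞))/U) ^ (1/(-(θ/(1-θ)))) ≠ 0 := by
          simp [ENNReal.rpow_eq_zero_iff, hd0, hdT]
        have htT : (((ε:ℝ≥0∞))/U) ^ (1/(-(θ/(1-θ)))) ≠ ⊤ := by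
          simp [ENNReal.rpow_eq_top_iff, hd0, hdT]
        have h := hT _ ht0 htT
        rw [hH0, mul_zero, zero_add] at h
        have htm : ((((ε:ℝ≥0∞))/U) ^ (1/(-(θ/(1-θ))))) ^ (-(θ/(1-θ))) * U = (ε:ℝ≥0∞) := by
          rw [← ENNReal.rpow_mul, one_div, inv_mul_cancel₀ hmne, ENNReal.rpow_one,
            ENNReal.div_mul_cancel hU0 hU.ne]
        rw [htm] at h
        exact h
    · rcases eq_or_ne H ⊤ with hHT | hHT
      · rw [hHT, ENNReal.top_rpow_of_pos hθ0, ENNReal.mul_top]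
        · exact le_top
        · rw [Ne, ENNReal.ofReal_eq_zero]
          push_neg
          positivity
      · have ht0 : H ^ (θ - 1) ≠ 0 := by
          simp [ENNReal.rpow_eq_zero_iff, hH0, hHT]
        have htT : H ^ (θ - 1) ≠ ⊤ := by
          simp [ENNReal.rpow_eq_top_iff, hH0, hHT]
        have h := hT _ ht0 htT
        have e3 : H ^ (θ - 1) * H = H ^ θ := by
          calc H ^ (θ-1) * H = H ^ (θ-1) * H ^ (1:ℝ) := by rw [ENNReal.rpow_one]
            _ = H ^ (θ-1+1) := (ENNReal.rpow_add _ _ hH0 hHT).symm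
            _ = H ^ θ := by norm_num
        have e4 : (H ^ (θ - 1)) ^ (-(θ/(1-θ))) = H ^ θ := by
          rw [← ENNReal.rpow_mul]
          congr 1
          field_simp
          ring
        rw [e3, e4] at h
        have e5 : (1:ℝ≥0∞) + U = ENNReal.ofReal (1 + U.toReal) := by
          rw [ENNReal.ofReal_add (by norm_num) ENNReal.toReal_nonneg, ENNReal.ofReal_one,
            ENNReal.ofReal_toReal hU.ne]
        calc magJ A f (Ω ×ˢ Ω) s₁ r ≤ H ^ θ + H ^ θ * U := h
          _ = ((1:ℝ≥0∞) + U) * H ^ θ := by ring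
          _ = ENNReal.ofReal (1 + U.toReal) * H ^ θ := by rw [e5]

end
end

section
/- Let Ω ⊆ ℝ^N be a bounded Lipschitz domain, A a bounded vector field on the convex hull of Ω, s ∈ (0,1), p, q ≥ 1. Suppose {f_n} ⊆ W^{s,p}(Ω, ℂ) is a sequence such that both ‖f_n‖_{L^q(Ω)} and the magnetic seminorms [f_n]_{W^{s,p}_A(Ω)} are uniformly bounded. Then ‖f_n‖_{W^{s,p}(Ω)} is uniformly bounded. -/
open MeasureTheory ENNReal NNReal Set
noncomputable section

/-! ### Auxiliary lemmas -/

lemma phase_norm_one {N : ℕ} (A : Euc N → Euc N) (x y : Euc N) : ‖phase A x y‖ = 1 := by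
  simp [phase, Complex.norm_exp]

lemma phase_sub_one_le {N : ℕ} {Ω : Set (Euc N)} {A : Euc N → Euc N} {MA : ℝ}
    (hA : ∀ x ∈ convexHull ℝ Ω, ‖A x‖ ≤ MA) {x y : Euc N} (hx : x ∈ Ω) (hy : y ∈ Ω) :
    ‖phase A x y - 1‖ ≤ 2 * MA * ‖x - y‖ := by
  set m : Euc N := (2:ℝ)⁻¹ • (x + y) with hm
  have hmem : m ∈ convexHull ℝ Ω := by
    have := (convex_convexHull ℝ Ω) (subset_convexHull ℝ Ω hx) (subset_convexHull ℝ Ω hy)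
      (by norm_num : (0:ℝ) ≤ 2⁻¹) (by norm_num : (0:ℝ) ≤ 2⁻¹) (by norm_num)
    simpa [hm, smul_add] using this
  set θ : ℝ := inner ℝ (x - y) (A m) with hθ
  have hθle : |θ| ≤ ‖x - y‖ * MA := by
    calc |θ| ≤ ‖x - y‖ * ‖A m‖ := abs_real_inner_le_norm _ _
    _ ≤ ‖x - y‖ * MA := by
      exact mul_le_mul_of_nonneg_left (hA m hmem) (norm_nonneg _)
  have habs : ‖Complex.I * (θ : ℂ)‖ = |θ| := by
    simp
  rcases le_total |θ| 1 with h1 | h1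
  · have := Complex.norm_exp_sub_one_le (x := Complex.I * (θ : ℂ)) (by rw [habs]; exact h1)
    rw [habs] at this
    calc ‖phase A x y - 1‖ ≤ 2 * |θ| := this
    _ ≤ 2 * (‖x - y‖ * MA) := by linarith
    _ = 2 * MA * ‖x - y‖ := by ring
  · have h2 : ‖phase A x y - 1‖ ≤ 2 := by
      calc ‖phase A x y - 1‖ ≤ ‖phase A x y‖ + ‖(1:ℂ)‖ := norm_sub_le _ _
      _ = 2 := by rw [phase_norm_one]; norm_num
    calc ‖phase A x y - 1‖ ≤ 2 := h2
    _ ≤ 2 * |θ| := by nlinarith [abs_nonneg θ]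
    _ ≤ 2 * (‖x - y‖ * MA) := by linarith
    _ = 2 * MA * ‖x - y‖ := by ring

lemma add_rpow_le_two_rpow {p : ℝ} (hp : 0 ≤ p) (a b : ℝ≥0∞) :
    (a + b) ^ p ≤ 2 ^ p * (a ^ p + b ^ p) := by
  calc (a + b) ^ p ≤ (2 * max a b) ^ p := by
        apply ENNReal.rpow_le_rpow _ hp
        rcases le_total a b with h | h
        · simp [max_eq_right h, two_mul]; exact add_le_add h le_rfl
        · simp [max_eq_left h, two_mul]; exact add_le_add le_rfl h
  _ = 2 ^ p * (max a b) ^ p := ENNReal.mul_rpow_of_nonneg _ _ hp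
  _ ≤ 2 ^ p * (a ^ p + b ^ p) := by
        apply mul_le_mul_right
        rcases le_total a b with h | h
        · rw [max_eq_right h]; exact le_add_self
        · rw [max_eq_left h]; exact self_le_add_right _ _

lemma ennreal_rpow_le_rpow_of_nonpos {a b : ℝ≥0∞} {r : ℝ} (hr : r ≤ 0) (hab : a ≤ b) :
    b ^ r ≤ a ^ r := by
  have h1 : b ^ r = (b ^ (-r))⁻¹ := by rw [← ENNReal.rpow_neg, neg_neg]
  have h2 : a ^ r = (a ^ (-r))⁻¹ := by rw [← ENNReal.rpow_neg, neg_neg]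
  rw [h1, h2]
  exact ENNReal.inv_le_inv.2 (ENNReal.rpow_le_rpow hab (by linarith))

lemma lint_rpow_ball {N : ℕ} {r : ℝ} (hr : -(N:ℝ) < r) (R : ℝ) :
    ∫⁻ z in Metric.ball (0 : Euc N) R, (‖z‖₊ : ℝ≥0∞) ^ r < ∞ := by
  rcases le_or_gt R 0 with hR | hR
  · simp [Metric.ball_eq_empty.2 hR]
  rcases le_or_gt 0 r with hr0 | hr0
  · have hbd : ∀ z ∈ Metric.ball (0 : Euc N) R,
        (‖z‖₊ : ℝ≥0∞) ^ r ≤ (ENNReal.ofReal R) ^ r := by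
      intro z hz
      apply ENNReal.rpow_le_rpow _ hr0
      rw [← enorm_eq_nnnorm, ← ofReal_norm]
      exact ENNReal.ofReal_le_ofReal (by simpa using (mem_ball_zero_iff.1 hz).le)
    calc ∫⁻ z in Metric.ball (0 : Euc N) R, (‖z‖₊ : ℝ≥0∞) ^ r
        ≤ ∫⁻ _ in Metric.ball (0 : Euc N) R, (ENNReal.ofReal R) ^ r := by
          apply lintegral_mono_ae
          filter_upwards [ae_restrict_mem measurableSet_ball] with z hz using hbd z hz
      _ = (ENNReal.ofReal R) ^ r * volume (Metric.ball (0 : Euc N) R) := by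
          rw [setLIntegral_const]
      _ < ∞ := ENNReal.mul_lt_top
          (ENNReal.rpow_lt_top_of_nonneg hr0 ENNReal.ofReal_ne_top)
          measure_ball_lt_top
  · have hN : 0 < N := by
      by_contra h
      push_neg at h
      interval_cases N
      · simp at hr; linarith
    haveI : Nontrivial (Euc N) := by
      refine ⟨⟨0, EuclideanSpace.single ⟨0, hN⟩ (1:ℝ), fun h => ?_⟩⟩
      have := congrArg (fun f : Euc N => f ⟨0, hN⟩) h
      simp [EuclideanSpace.single_apply] at this
    set S : ℕ → Set (Euc N) := fun k =>
      Metric.ball (0 : Euc N) (R / 2 ^ k) \ Metric.ball (0 : Euc N) (R / 2 ^ (k + 1)) with hS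
    have hsub : Metric.ball (0 : Euc N) R ⊆ {(0 : Euc N)} ∪ ⋃ k, S k := by
      intro z hz
      rcases eq_or_ne z 0 with rfl | hz0
      · exact Or.inl rfl
      right
      have hznorm : 0 < ‖z‖ := norm_pos_iff.2 hz0
      have hex : ∃ k : ℕ, R / 2 ^ (k + 1) ≤ ‖z‖ := by
        obtain ⟨k, hk⟩ := pow_unbounded_of_one_lt (R / ‖z‖) (one_lt_two (α := ℝ))
        refine ⟨k, ?_⟩
        rw [div_le_iff₀ (by positivity)]
        have : R / ‖z‖ < 2 ^ (k + 1) := hk.trans (by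
          exact pow_lt_pow_right₀ (one_lt_two : (1:ℝ) < 2) (Nat.lt_succ_self k))
        calc R = (R / ‖z‖) * ‖z‖ := by field_simp
        _ ≤ 2 ^ (k + 1) * ‖z‖ := by nlinarith
        _ = ‖z‖ * 2 ^ (k + 1) := by ring
      classical
      set k₀ := Nat.find hex with hk₀
      refine mem_iUnion.2 ⟨k₀, ?_, ?_⟩
      · rw [mem_ball_zero_iff]
        rcases Nat.eq_zero_or_pos k₀ with h0 | hpos
        · rw [h0]; simpa using mem_ball_zero_iff.1 hz
        · obtain ⟨j, hj⟩ := Nat.exists_eq_succ_of_ne_zero hpos.ne'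
          have := Nat.find_min hex (m := j) (by omega)
          push_neg at this
          rw [hj]
          exact this
      · intro hmem
        exact absurd (Nat.find_spec hex) (by simpa using (mem_ball_zero_iff.1 hmem).not_ge)
    have hzero : volume ({(0 : Euc N)} : Set (Euc N)) = 0 := measure_singleton 0
    set C1 : ℝ≥0∞ := volume (Metric.ball (0 : Euc N) 1) with hC1
    have hC1top : C1 < ∞ := measure_ball_lt_top
    set e : ℝ := r + N with he
    have he0 : 0 < e := by rw [he]; linarith
    set t : ℝ≥0∞ := (ENNReal.ofReal (1/2 : ℝ)) ^ e with ht
    have ht1 : t < 1 := ENNReal.rpow_lt_one (by rw [ENNReal.ofReal_lt_one]; norm_num) he0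
    set c : ℝ≥0∞ := (2:ℝ≥0∞) ^ N * C1 * (ENNReal.ofReal (R/2)) ^ e with hc
    have hcfin : c < ∞ := by
      apply ENNReal.mul_lt_top (ENNReal.mul_lt_top _ hC1top)
          (ENNReal.rpow_lt_top_of_nonneg he0.le ENNReal.ofReal_ne_top)
      exact ENNReal.pow_lt_top (by norm_num)
    have hterm : ∀ k : ℕ, ∫⁻ z in S k, (‖z‖₊ : ℝ≥0∞) ^ r ≤ c * t ^ k := by
      intro k
      set u : ℝ≥0∞ := ENNReal.ofReal (R / 2 ^ (k+1)) with hu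
      have hupos : (0:ℝ) < R / 2 ^ (k+1) := by positivity
      have hu0 : u ≠ 0 := by simp [hu, ENNReal.ofReal_eq_zero, not_le, hupos]
      have hut : u ≠ ∞ := ENNReal.ofReal_ne_top
      have hpt : ∀ z ∈ S k, (‖z‖₊ : ℝ≥0∞) ^ r ≤ u ^ r := by
        intro z hz
        apply ennreal_rpow_le_rpow_of_nonpos hr0.le
        rw [hu, ← enorm_eq_nnnorm, ← ofReal_norm]
        apply ENNReal.ofReal_le_ofReal
        have := hz.2
        rw [mem_ball_zero_iff, not_lt] at this
        exact this
      have hSvol : volume (S k) ≤ ENNReal.ofReal ((R / 2 ^ k) ^ N) * C1 := by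
        calc volume (S k) ≤ volume (Metric.ball (0 : Euc N) (R / 2 ^ k)) :=
              measure_mono diff_subset
        _ = ENNReal.ofReal ((R / 2 ^ k) ^ Module.finrank ℝ (Euc N)) * C1 :=
              Measure.addHaar_ball volume (0 : Euc N) (by positivity)
        _ = ENNReal.ofReal ((R / 2 ^ k) ^ N) * C1 := by rw [finrank_euclideanSpace_fin]
      calc ∫⁻ z in S k, (‖z‖₊ : ℝ≥0∞) ^ r ≤ ∫⁻ _ in S k, u ^ r := by
            apply lintegral_mono_ae
            have hSm : MeasurableSet (S k) := measurableSet_ball.diff measurableSet_ball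
            filter_upwards [ae_restrict_mem hSm] with z hz using hpt z hz
      _ = u ^ r * volume (S k) := setLIntegral_const _ _
      _ ≤ u ^ r * (ENNReal.ofReal ((R / 2 ^ k) ^ N) * C1) := mul_le_mul_right hSvol _
      _ = c * t ^ k := by
            have h1 : (R / 2 ^ k : ℝ) = 2 * (R / 2 ^ (k+1)) := by
              field_simp; ring
            have h2 : ENNReal.ofReal ((R / 2 ^ k) ^ N) = (2:ℝ≥0∞) ^ N * u ^ (N : ℕ) := by
              rw [h1, mul_pow, ENNReal.ofReal_mul (by positivity), hu,
                ← ENNReal.ofReal_pow hupos.le,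
                ENNReal.ofReal_pow (by norm_num : (0:ℝ) ≤ 2), ENNReal.ofReal_ofNat]
            have h3 : u ^ r * u ^ (N:ℕ) = u ^ e := by
              rw [← ENNReal.rpow_natCast u N, ← ENNReal.rpow_add _ _ hu0 hut, he]
            have h4 : u = ENNReal.ofReal (R/2) * ENNReal.ofReal (1/2:ℝ) ^ k := by
              rw [hu, ← ENNReal.ofReal_pow (by norm_num), ← ENNReal.ofReal_mul (by positivity)]
              congr 1
              simp only [pow_succ, div_eq_mul_inv, mul_inv, one_div, inv_pow]
              rw [one_mul, inv_pow]
              ring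
            have h5 : u ^ e = ENNReal.ofReal (R/2) ^ e * t ^ k := by
              rw [h4, ENNReal.mul_rpow_of_nonneg _ _ he0.le, ht,
                ← ENNReal.rpow_natCast (ENNReal.ofReal (1/2:ℝ)) k, ← ENNReal.rpow_mul,
                mul_comm (k:ℝ) e, ENNReal.rpow_mul, ENNReal.rpow_natCast]
            rw [h2]
            calc u ^ r * ((2:ℝ≥0∞) ^ N * u ^ (N:ℕ) * C1)
                = (2:ℝ≥0∞) ^ N * C1 * (u ^ r * u ^ (N:ℕ)) := by ring
            _ = (2:ℝ≥0∞) ^ N * C1 * u ^ e := by rw [h3]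
            _ = c * t ^ k := by rw [h5, hc]; ring
    calc ∫⁻ z in Metric.ball (0 : Euc N) R, (‖z‖₊ : ℝ≥0∞) ^ r
        ≤ ∫⁻ z in {(0 : Euc N)} ∪ ⋃ k, S k, (‖z‖₊ : ℝ≥0∞) ^ r :=
          lintegral_mono' (Measure.restrict_mono hsub le_rfl) le_rfl
    _ ≤ (∫⁻ z in {(0 : Euc N)}, (‖z‖₊ : ℝ≥0∞) ^ r) + ∫⁻ z in ⋃ k, S k, (‖z‖₊ : ℝ≥0∞) ^ r :=
          lintegral_union_le _ _ _
    _ = ∫⁻ z in ⋃ k, S k, (‖z‖₊ : ℝ≥0∞) ^ r := by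
          rw [setLIntegral_measure_zero _ _ hzero, zero_add]
    _ ≤ ∑' k, ∫⁻ z in S k, (‖z‖₊ : ℝ≥0∞) ^ r := lintegral_iUnion_le _ _
    _ ≤ ∑' k : ℕ, c * t ^ k := ENNReal.tsum_le_tsum hterm
    _ = c * (1 - t)⁻¹ := by rw [ENNReal.tsum_mul_left, ENNReal.tsum_geometric]
    _ < ∞ := by
          apply ENNReal.mul_lt_top hcfin
          rw [ENNReal.inv_lt_top]
          exact tsub_pos_iff_lt.2 ht1

lemma magJ_congr {N : ℕ} {Ω : Set (Euc N)} {f g : Euc N → ℂ}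
    (h : f =ᵐ[volume.restrict Ω] g) (A : Euc N → Euc N) (s p : ℝ) :
    magJ A f (Ω ×ˢ Ω) s p = magJ A g (Ω ×ˢ Ω) s p := by
  classical
  set ν : Measure (Euc N) := volume.restrict Ω with hν
  have hμ : (volume : Measure (Euc N × Euc N)).restrict (Ω ×ˢ Ω) = ν.prod ν := by
    rw [hν, Measure.prod_restrict, ← Measure.volume_eq_prod]
  unfold magJ
  rw [hμ]
  have hnull : ν {x | f x ≠ g x} = 0 := ae_iff.1 h
  set T : Set (Euc N) := toMeasurable ν {x | f x ≠ g x} with hT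
  have hT0 : ν T = 0 := by rw [hT, measure_toMeasurable]; exact hnull
  have hTsub : {x | f x ≠ g x} ⊆ T := subset_toMeasurable _ _
  have h1 : (ν.prod ν) (T ×ˢ (univ : Set (Euc N))) = 0 := by
    rw [Measure.prod_prod, hT0, zero_mul]
  have h2 : (ν.prod ν) ((univ : Set (Euc N)) ×ˢ T) = 0 := by
    rw [Measure.prod_prod, hT0, mul_zero]
  have hae : ∀ᵐ z ∂(ν.prod ν), z.1 ∉ T ∧ z.2 ∉ T := by
    rw [ae_iff]
    apply measure_mono_null ?_ (measure_union_null h1 h2)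
    intro z hz
    simp only [mem_setOf_eq, not_and_or, not_not] at hz
    rcases hz with hz | hz
    · exact Or.inl ⟨hz, mem_univ _⟩
    · exact Or.inr ⟨mem_univ _, hz⟩
  apply lintegral_congr_ae
  filter_upwards [hae] with z hz
  have e1 : f z.1 = g z.1 := by
    by_contra hne
    exact hz.1 (hTsub hne)
  have e2 : f z.2 = g z.2 := by
    by_contra hne
    exact hz.2 (hTsub hne)
  rw [mdiff, mdiff, e1, e2]

lemma lp_bound {N : ℕ} {Ω : Set (Euc N)} (hΩm : MeasurableSet Ω)
    (hV0 : volume Ω ≠ 0) (hVfin : volume Ω ≠ ∞) (A : Euc N → Euc N)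
    {s p q : ℝ} (hs0 : 0 ≤ s) (hp0 : 0 < p) (hq0 : 0 < q)
    {d' c B₂' : ℝ≥0∞} (hd'fin : d' ≠ ∞)
    (hd' : ∀ x ∈ Ω, ∀ y ∈ Ω, ((‖x - y‖₊ : ℝ≥0∞)) ^ ((N:ℝ) + s*p) ≤ d')
    {g : Euc N → ℂ} (hg : Measurable g)
    (hT : ∫⁻ x in Ω, (‖g x‖₊ : ℝ≥0∞) ^ q ≤ (volume Ω / 2) * c)
    (hc0 : c ≠ 0) (hcfin : c ≠ ∞)
    (hmag : magJ A g (Ω ×ˢ Ω) s p ≤ B₂') :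
    ∫⁻ x in Ω, (‖g x‖₊ : ℝ≥0∞) ^ p ≤
      (2^p * (d' * B₂' + c^(p/q) * volume Ω * volume Ω)) / (volume Ω / 2) := by
  classical
  set V : ℝ≥0∞ := volume Ω with hV
  set μ : Measure (Euc N) := volume.restrict Ω with hμ
  set h : Euc N → ℝ≥0∞ := fun x => (‖g x‖₊ : ℝ≥0∞) ^ q with hh
  have hhm : Measurable h := hg.nnnorm.coe_nnreal_ennreal.pow_const q
  have hsetm : MeasurableSet {x | c ≤ h x} := hhm measurableSet_Ici
  have hcheb : μ {x | c ≤ h x} ≤ V / 2 := by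
    calc μ {x | c ≤ h x} ≤ (∫⁻ x, h x ∂μ) / c :=
          meas_ge_le_lintegral_div hhm.aemeasurable hc0 hcfin
    _ ≤ ((V / 2) * c) / c := by gcongr
    _ = (V / 2) * (c / c) := by rw [mul_div_assoc]
    _ = V / 2 := by rw [ENNReal.div_self hc0 hcfin, mul_one]
  set E : Set (Euc N) := Ω ∩ {x | h x < c} with hE
  have hEm : MeasurableSet E := hΩm.inter (hhm measurableSet_Iio)
  have hEsub : E ⊆ Ω := inter_subset_left
  have hEfin : volume E ≠ ∞ := ((measure_mono hEsub).trans_lt hVfin.lt_top).ne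
  have hEvol : V / 2 ≤ volume E := by
    have hcover : Ω ⊆ E ∪ ({x | c ≤ h x} ∩ Ω) := by
      intro x hx
      by_cases hlt : h x < c
      · exact Or.inl ⟨hx, hlt⟩
      · exact Or.inr ⟨not_lt.1 hlt, hx⟩
    have h1 : V ≤ volume E + V / 2 := by
      calc V ≤ volume (E ∪ ({x | c ≤ h x} ∩ Ω)) := measure_mono hcover
      _ ≤ volume E + volume ({x | c ≤ h x} ∩ Ω) := measure_union_le _ _
      _ ≤ volume E + V / 2 := by
            apply add_le_add le_rfl
            rw [← Measure.restrict_apply hsetm] at *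
            exact hcheb
    have h2 : V - V / 2 ≤ volume E := tsub_le_iff_right.2 h1
    rwa [ENNReal.sub_half hVfin] at h2
  have hE0 : volume E ≠ 0 := by
    intro h0
    rw [h0] at hEvol
    have : V = 0 := by
      have := le_antisymm hEvol (zero_le)
      rwa [ENNReal.div_eq_zero_iff, or_iff_left (by norm_num : (2:ℝ≥0∞) ≠ ∞)] at this
    exact hV0 this
  haveI : IsFiniteMeasure μ := ⟨by rw [hμ, Measure.restrict_apply_univ]; exact hVfin.lt_top⟩
  haveI : IsFiniteMeasure (volume.restrict E) :=
    ⟨by rw [Measure.restrict_apply_univ]; exact hEfin.lt_top⟩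
  set ν : Measure (Euc N × Euc N) := μ.prod (volume.restrict E) with hν
  have hνr : ν = (volume : Measure (Euc N × Euc N)).restrict (Ω ×ˢ E) := by
    rw [hν, hμ, Measure.prod_restrict, ← Measure.volume_eq_prod]
  set W : Euc N × Euc N → ℝ≥0∞ := fun z =>
    (‖mdiff A g z.1 z.2‖₊ : ℝ≥0∞) ^ p / (‖z.1 - z.2‖₊ : ℝ≥0∞) ^ ((N:ℝ) + s*p) with hW
  have key : ∀ z ∈ Ω ×ˢ E, (‖g z.1‖₊ : ℝ≥0∞) ^ p ≤ 2^p * (d' * W z + c^(p/q)) := by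
    rintro ⟨x, y⟩ ⟨hx, hyE⟩
    have hy : y ∈ Ω := hEsub hyE
    have n1 : (‖g x‖₊ : ℝ≥0∞) ≤ (‖mdiff A g x y‖₊ : ℝ≥0∞) + (‖g y‖₊ : ℝ≥0∞) := by
      rw [← enorm_eq_nnnorm, ← enorm_eq_nnnorm, ← enorm_eq_nnnorm, ← ofReal_norm, ← ofReal_norm, ← ofReal_norm,
        ← ENNReal.ofReal_add (norm_nonneg _) (norm_nonneg _)]
      apply ENNReal.ofReal_le_ofReal
      calc ‖g x‖ = ‖mdiff A g x y + phase A x y * g y‖ := by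
            congr 1; rw [mdiff]; ring
      _ ≤ ‖mdiff A g x y‖ + ‖phase A x y * g y‖ := norm_add_le _ _
      _ = ‖mdiff A g x y‖ + ‖g y‖ := by rw [norm_mul, phase_norm_one, one_mul]
    have n2 : (‖mdiff A g x y‖₊ : ℝ≥0∞) ^ p ≤ d' * W (x, y) := by
      rcases eq_or_ne x y with rfl | hxy
      · rw [mdiff_self]
        simp [ENNReal.zero_rpow_of_pos hp0]
      · have hnz : ((‖x - y‖₊ : ℝ≥0∞)) ≠ 0 := by
          simp only [ne_eq, ENNReal.coe_eq_zero, nnnorm_eq_zero, sub_eq_zero]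
          exact hxy
        have hde : ((‖x - y‖₊ : ℝ≥0∞)) ^ ((N:ℝ) + s*p) ≠ 0 := by
          simp [ENNReal.rpow_eq_zero_iff, hnz]
        have hdt : ((‖x - y‖₊ : ℝ≥0∞)) ^ ((N:ℝ) + s*p) ≠ ∞ := by
          apply ENNReal.rpow_ne_top_of_nonneg ?_ ENNReal.coe_ne_top
          positivity
        have : (‖mdiff A g x y‖₊ : ℝ≥0∞) ^ p
            = W (x, y) * ((‖x - y‖₊ : ℝ≥0∞)) ^ ((N:ℝ) + s*p) := by
          rw [hW]
          exact (ENNReal.div_mul_cancel hde hdt).symm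
        rw [this, mul_comm]
        exact mul_le_mul' (hd' x hx y hy) le_rfl
    have n3 : (‖g y‖₊ : ℝ≥0∞) ^ p ≤ c ^ (p/q) := by
      have hb : ((‖g y‖₊ : ℝ≥0∞) ^ q) ≤ c := hyE.2.le
      calc (‖g y‖₊ : ℝ≥0∞) ^ p = ((‖g y‖₊ : ℝ≥0∞) ^ q) ^ (p/q) := by
            rw [← ENNReal.rpow_mul]
            congr 1
            field_simp
      _ ≤ c ^ (p/q) := ENNReal.rpow_le_rpow hb (by positivity)
    calc (‖g x‖₊ : ℝ≥0∞) ^ p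
        ≤ ((‖mdiff A g x y‖₊ : ℝ≥0∞) + (‖g y‖₊ : ℝ≥0∞)) ^ p :=
          ENNReal.rpow_le_rpow n1 hp0.le
    _ ≤ 2 ^ p * ((‖mdiff A g x y‖₊ : ℝ≥0∞) ^ p + (‖g y‖₊ : ℝ≥0∞) ^ p) :=
          add_rpow_le_two_rpow hp0.le _ _
    _ ≤ 2 ^ p * (d' * W (x, y) + c ^ (p/q)) := by
          apply mul_le_mul_right
          exact add_le_add n2 n3
  have hIpvol : (∫⁻ x in Ω, (‖g x‖₊ : ℝ≥0∞) ^ p) * volume E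
      = ∫⁻ z, (‖g z.1‖₊ : ℝ≥0∞) ^ p ∂ν := by
    have := lintegral_prod_mul (μ := μ) (ν := volume.restrict E)
      (f := fun x => (‖g x‖₊ : ℝ≥0∞) ^ p) (g := fun _ => (1:ℝ≥0∞))
      (hg.nnnorm.coe_nnreal_ennreal.pow_const p).aemeasurable aemeasurable_const
    simp only [lintegral_one, Measure.restrict_apply_univ, mul_one] at this
    rw [← this, hμ]
  have hWle : ∫⁻ z, W z ∂ν ≤ B₂' := by
    refine le_trans ?_ hmag
    rw [magJ, hνr]
    exact lintegral_mono' (Measure.restrict_mono (Set.prod_mono subset_rfl hEsub) le_rfl) le_rfl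
  have hmain : (∫⁻ x in Ω, (‖g x‖₊ : ℝ≥0∞) ^ p) * volume E
      ≤ 2^p * (d' * B₂' + c^(p/q) * V * volume E) := by
    rw [hIpvol]
    calc ∫⁻ z, (‖g z.1‖₊ : ℝ≥0∞) ^ p ∂ν
        ≤ ∫⁻ z, 2^p * (d' * W z + c^(p/q)) ∂ν := by
          apply lintegral_mono_ae
          rw [hνr]
          filter_upwards [ae_restrict_mem (hΩm.prod hEm)] with z hz using key z hz
    _ = 2^p * ∫⁻ z, (d' * W z + c^(p/q)) ∂ν :=
          lintegral_const_mul' _ _ (by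
            exact ENNReal.rpow_ne_top_of_nonneg hp0.le (by norm_num))
    _ = 2^p * ((∫⁻ z, d' * W z ∂ν) + c^(p/q) * ν univ) := by
          rw [lintegral_add_right _ measurable_const, lintegral_const]
    _ = 2^p * (d' * (∫⁻ z, W z ∂ν) + c^(p/q) * (V * volume E)) := by
          rw [lintegral_const_mul' _ _ hd'fin]
          congr 2
          rw [hν, ← Set.univ_prod_univ, Measure.prod_prod, hμ,
            Measure.restrict_apply_univ, Measure.restrict_apply_univ]
    _ ≤ 2^p * (d' * B₂' + c^(p/q) * V * volume E) := by
          rw [mul_assoc (c^(p/q))]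
          exact mul_le_mul_right (add_le_add (mul_le_mul_right hWle _) le_rfl) _
  have step : (∫⁻ x in Ω, (‖g x‖₊ : ℝ≥0∞) ^ p) * volume E
      ≤ 2^p * (d' * B₂' + c^(p/q) * V * V) := by
    refine hmain.trans ?_
    apply mul_le_mul_right
    apply add_le_add le_rfl
    exact mul_le_mul_right (measure_mono hEsub) _
  have : (∫⁻ x in Ω, (‖g x‖₊ : ℝ≥0∞) ^ p) ≤ 2^p * (d' * B₂' + c^(p/q) * V * V) / volume E :=
    (ENNReal.le_div_iff_mul_le (Or.inl hE0) (Or.inl hEfin)).2 step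
  exact this.trans (ENNReal.div_le_div_left hEvol _)

lemma gag_bound {N : ℕ} {Ω : Set (Euc N)} (hΩm : MeasurableSet Ω)
    (hVfin : volume Ω ≠ ∞) (A : Euc N → Euc N)
    {s p : ℝ} (hs0 : 0 ≤ s) (hp0 : 0 < p)
    {m' C B₂' Ip : ℝ≥0∞} (hm'fin : m' ≠ ∞) (hCfin : C ≠ ∞)
    (hph : ∀ x ∈ Ω, ∀ y ∈ Ω, ((‖phase A x y - 1‖₊ : ℝ≥0∞)) ≤ m' * (‖x - y‖₊ : ℝ≥0∞))
    (hC : ∀ y ∈ Ω, ∫⁻ x in Ω, ((‖x - y‖₊ : ℝ≥0∞)) ^ ((1-s)*p - (N:ℝ)) ≤ C)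
    {g : Euc N → ℂ} (hg : Measurable g)
    (hIp : ∫⁻ x in Ω, (‖g x‖₊ : ℝ≥0∞) ^ p ≤ Ip)
    (hmag : magJ A g (Ω ×ˢ Ω) s p ≤ B₂') :
    magJ (fun _ => (0 : Euc N)) g (Ω ×ˢ Ω) s p ≤ 2^p * B₂' + 2^p * (m'^p * (C * Ip)) := by
  classical
  set μ : Measure (Euc N) := volume.restrict Ω with hμ
  haveI : IsFiniteMeasure μ := ⟨by rw [hμ, Measure.restrict_apply_univ]; exact hVfin.lt_top⟩
  set e : ℝ := (N:ℝ) + s * p with he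
  set r : ℝ := (1-s)*p - (N:ℝ) with hr
  set W : Euc N × Euc N → ℝ≥0∞ := fun z =>
    (‖mdiff A g z.1 z.2‖₊ : ℝ≥0∞) ^ p / (‖z.1 - z.2‖₊ : ℝ≥0∞) ^ e with hW
  set K : Euc N × Euc N → ℝ≥0∞ := fun z =>
    (‖z.1 - z.2‖₊ : ℝ≥0∞) ^ r * (‖g z.2‖₊ : ℝ≥0∞) ^ p with hK
  have hKm : Measurable K := by
    apply Measurable.mul
    · exact ((measurable_fst.sub measurable_snd).nnnorm.coe_nnreal_ennreal).pow_const r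
    · exact ((hg.comp measurable_snd).nnnorm.coe_nnreal_ennreal).pow_const p
  have mdiff0 : ∀ x y : Euc N, mdiff (fun _ => (0 : Euc N)) g x y = g x - g y := by
    intro x y
    simp [mdiff, phase]
  have key : ∀ z ∈ Ω ×ˢ Ω,
      (‖mdiff (fun _ => (0 : Euc N)) g z.1 z.2‖₊ : ℝ≥0∞) ^ p / (‖z.1 - z.2‖₊ : ℝ≥0∞) ^ e
        ≤ 2^p * W z + 2^p * (m'^p * K z) := by
    rintro ⟨x, y⟩ ⟨hx, hy⟩
    rcases eq_or_ne x y with rfl | hxy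
    · rw [mdiff0]
      simp [ENNReal.zero_rpow_of_pos hp0]
    have hnz : ((‖x - y‖₊ : ℝ≥0∞)) ≠ 0 := by
      simp only [ne_eq, ENNReal.coe_eq_zero, nnnorm_eq_zero, sub_eq_zero]
      exact hxy
    have hD0 : ((‖x - y‖₊ : ℝ≥0∞)) ^ e ≠ 0 := by simp [ENNReal.rpow_eq_zero_iff, hnz]
    have hDt : ((‖x - y‖₊ : ℝ≥0∞)) ^ e ≠ ∞ :=
      ENNReal.rpow_ne_top_of_nonneg (by positivity) ENNReal.coe_ne_top
    have n1 : (‖g x - g y‖₊ : ℝ≥0∞)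
        ≤ (‖mdiff A g x y‖₊ : ℝ≥0∞) + m' * (‖x - y‖₊ : ℝ≥0∞) * (‖g y‖₊ : ℝ≥0∞) := by
      have split : g x - g y = mdiff A g x y + (phase A x y - 1) * g y := by
        rw [mdiff]; ring
      calc (‖g x - g y‖₊ : ℝ≥0∞)
          ≤ (‖mdiff A g x y‖₊ : ℝ≥0∞) + (‖(phase A x y - 1) * g y‖₊ : ℝ≥0∞) := by
            rw [split]
            exact_mod_cast nnnorm_add_le _ _
      _ = (‖mdiff A g x y‖₊ : ℝ≥0∞) + (‖phase A x y - 1‖₊ : ℝ≥0∞) * (‖g y‖₊ : ℝ≥0∞) := by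
            rw [nnnorm_mul]; push_cast; ring
      _ ≤ (‖mdiff A g x y‖₊ : ℝ≥0∞) + m' * (‖x - y‖₊ : ℝ≥0∞) * (‖g y‖₊ : ℝ≥0∞) := by
            exact add_le_add le_rfl (mul_le_mul' (hph x hx y hy) le_rfl)
    have n2 : (‖g x - g y‖₊ : ℝ≥0∞) ^ p
        ≤ 2^p * ((‖mdiff A g x y‖₊ : ℝ≥0∞) ^ p
            + m'^p * (‖x - y‖₊ : ℝ≥0∞) ^ p * (‖g y‖₊ : ℝ≥0∞) ^ p) := by
      calc (‖g x - g y‖₊ : ℝ≥0∞) ^ p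
          ≤ ((‖mdiff A g x y‖₊ : ℝ≥0∞) + m' * (‖x - y‖₊ : ℝ≥0∞) * (‖g y‖₊ : ℝ≥0∞)) ^ p :=
            ENNReal.rpow_le_rpow n1 hp0.le
      _ ≤ 2^p * ((‖mdiff A g x y‖₊ : ℝ≥0∞) ^ p
            + (m' * (‖x - y‖₊ : ℝ≥0∞) * (‖g y‖₊ : ℝ≥0∞)) ^ p) := add_rpow_le_two_rpow hp0.le _ _
      _ = 2^p * ((‖mdiff A g x y‖₊ : ℝ≥0∞) ^ p
            + m'^p * (‖x - y‖₊ : ℝ≥0∞) ^ p * (‖g y‖₊ : ℝ≥0∞) ^ p) := by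
            rw [ENNReal.mul_rpow_of_nonneg _ _ hp0.le, ENNReal.mul_rpow_of_nonneg _ _ hp0.le]
    have hxyp : ((‖x - y‖₊ : ℝ≥0∞)) ^ p / ((‖x - y‖₊ : ℝ≥0∞)) ^ e
        = ((‖x - y‖₊ : ℝ≥0∞)) ^ r := by
      have hpe : p = r + e := by rw [hr, he]; ring
      rw [hpe, ENNReal.rpow_add _ _ hnz ENNReal.coe_ne_top, mul_div_assoc,
        ENNReal.div_self hD0 hDt, mul_one]
    rw [mdiff0]
    calc (‖g x - g y‖₊ : ℝ≥0∞) ^ p / ((‖x - y‖₊ : ℝ≥0∞)) ^ e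
        ≤ (2^p * ((‖mdiff A g x y‖₊ : ℝ≥0∞) ^ p
            + m'^p * (‖x - y‖₊ : ℝ≥0∞) ^ p * (‖g y‖₊ : ℝ≥0∞) ^ p)) / ((‖x - y‖₊ : ℝ≥0∞)) ^ e :=
          ENNReal.div_le_div_right n2 _
    _ = 2^p * ((‖mdiff A g x y‖₊ : ℝ≥0∞) ^ p / ((‖x - y‖₊ : ℝ≥0∞)) ^ e)
          + 2^p * (m'^p * ((‖x - y‖₊ : ℝ≥0∞) ^ p / ((‖x - y‖₊ : ℝ≥0∞)) ^ e)
              * (‖g y‖₊ : ℝ≥0∞) ^ p) := by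
          simp only [div_eq_mul_inv]
          ring
    _ = 2^p * W (x, y) + 2^p * (m'^p * K (x, y)) := by
          simp only [hxyp, hW, hK]
          ring
  have hprod : (volume : Measure (Euc N × Euc N)).restrict (Ω ×ˢ Ω) = μ.prod μ := by
    rw [hμ, Measure.prod_restrict, ← Measure.volume_eq_prod]
  have hKint : ∫⁻ z in Ω ×ˢ Ω, K z ≤ C * Ip := by
    rw [hprod, lintegral_prod_symm K hKm.aemeasurable]
    calc ∫⁻ y, ∫⁻ x, K (x, y) ∂μ ∂μ ≤ ∫⁻ y, C * (‖g y‖₊ : ℝ≥0∞) ^ p ∂μ := by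
          apply lintegral_mono_ae
          rw [hμ]
          filter_upwards [ae_restrict_mem hΩm] with y hy
          have hfin : ((‖g y‖₊ : ℝ≥0∞) ^ p) ≠ ∞ :=
            ENNReal.rpow_ne_top_of_nonneg hp0.le ENNReal.coe_ne_top
          calc ∫⁻ x, K (x, y) ∂μ
              = (∫⁻ x, (‖x - y‖₊ : ℝ≥0∞) ^ r ∂μ) * (‖g y‖₊ : ℝ≥0∞) ^ p := by
                simp only [hK]
                exact lintegral_mul_const' _ _ hfin
          _ ≤ C * (‖g y‖₊ : ℝ≥0∞) ^ p := mul_le_mul' (hC y hy) le_rfl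
    _ = C * ∫⁻ y, (‖g y‖₊ : ℝ≥0∞) ^ p ∂μ := lintegral_const_mul' _ _ hCfin
    _ ≤ C * Ip := mul_le_mul' le_rfl hIp
  have h2pfin : ((2:ℝ≥0∞) ^ p) ≠ ∞ := ENNReal.rpow_ne_top_of_nonneg hp0.le (by norm_num)
  calc magJ (fun _ => (0 : Euc N)) g (Ω ×ˢ Ω) s p
      = ∫⁻ z in Ω ×ˢ Ω,
          (‖mdiff (fun _ => (0 : Euc N)) g z.1 z.2‖₊ : ℝ≥0∞) ^ p / (‖z.1 - z.2‖₊ : ℝ≥0∞) ^ e := rfl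
  _ ≤ ∫⁻ z in Ω ×ˢ Ω, (2^p * W z + 2^p * (m'^p * K z)) := by
        apply lintegral_mono_ae
        filter_upwards [ae_restrict_mem (hΩm.prod hΩm)] with z hz using key z hz
  _ = (∫⁻ z in Ω ×ˢ Ω, 2^p * W z) + ∫⁻ z in Ω ×ˢ Ω, 2^p * (m'^p * K z) := by
        apply lintegral_add_right
        apply Measurable.const_mul
        exact hKm.const_mul _
  _ ≤ 2^p * B₂' + 2^p * (m'^p * (C * Ip)) := by
        apply add_le_add
        · rw [lintegral_const_mul' _ _ h2pfin]
          exact mul_le_mul' le_rfl hmag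
        · have : ∀ z : Euc N × Euc N, 2^p * (m'^p * K z) = (2^p * m'^p) * K z := by
            intro z; ring
          simp only [this]
          rw [lintegral_const_mul' _ _ (ENNReal.mul_ne_top h2pfin
            (ENNReal.rpow_ne_top_of_nonneg hp0.le hm'fin))]
          rw [mul_assoc]
          exact mul_le_mul' le_rfl (mul_le_mul' le_rfl hKint)

/-- an `L^q` bound together with a magnetic seminorm bound gives a full
`W^{s,p}` norm bound, uniformly along a sequence. -/
theorem stmt_8 {N : ℕ} (Ω : Set (Euc N)) (hΩo : IsOpen Ω) (hΩc : IsConnected Ω)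
    (hΩb : Bornology.IsBounded Ω) (hΩl : HasLipschitzBoundary Ω)
    (A : Euc N → Euc N) (MA : ℝ) (hA : ∀ x ∈ convexHull ℝ Ω, ‖A x‖ ≤ MA)
    (s p q : ℝ) (hs : s ∈ Set.Ioo (0:ℝ) 1) (hp : 1 ≤ p) (hq : 1 ≤ q)
    (f : ℕ → Euc N → ℂ) (hf : ∀ n, memW (f n) Ω s p)
    (B₁ B₂ : ℝ≥0∞) (hB₁ : B₁ ≠ ∞) (hB₂ : B₂ ≠ ∞)
    (hbd₁ : ∀ n, eLpNorm (f n) (ENNReal.ofReal q) (volume.restrict Ω) ≤ B₁)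
    (hbd₂ : ∀ n, magSemi A (f n) Ω s p ≤ B₂) :
    ∃ B : ℝ≥0∞, B ≠ ∞ ∧ ∀ n, normW (f n) Ω s p ≤ B := by
  classical
  obtain ⟨hs0, hs1⟩ := hs
  have hp0 : 0 < p := lt_of_lt_of_le one_pos hp
  have hq0 : 0 < q := lt_of_lt_of_le one_pos hq
  have hne : Ω.Nonempty := hΩc.nonempty
  have hΩm : MeasurableSet Ω := hΩo.measurableSet
  have hV0 : volume Ω ≠ 0 := (hΩo.measure_pos volume hne).ne'
  have hVfin : volume Ω ≠ ∞ := hΩb.measure_lt_top.ne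
  set V : ℝ≥0∞ := volume Ω with hV
  obtain ⟨x₀, hx₀⟩ := hne
  have hMA : 0 ≤ MA := le_trans (norm_nonneg _) (hA x₀ (subset_convexHull ℝ Ω hx₀))
  set D : ℝ := Metric.diam Ω with hD
  have hDnn : 0 ≤ D := Metric.diam_nonneg
  set d' : ℝ≥0∞ := (ENNReal.ofReal (D + 1)) ^ ((N:ℝ) + s * p) with hd'def
  have hd'fin : d' ≠ ∞ :=
    ENNReal.rpow_ne_top_of_nonneg (by positivity) ENNReal.ofReal_ne_top
  have hd' : ∀ x ∈ Ω, ∀ y ∈ Ω, ((‖x - y‖₊ : ℝ≥0∞)) ^ ((N:ℝ) + s*p) ≤ d' := by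
    intro x hx y hy
    apply ENNReal.rpow_le_rpow _ (by positivity)
    rw [← enorm_eq_nnnorm, ← ofReal_norm]
    apply ENNReal.ofReal_le_ofReal
    calc ‖x - y‖ = dist x y := (dist_eq_norm x y).symm
    _ ≤ D := Metric.dist_le_diam_of_mem hΩb hx hy
    _ ≤ D + 1 := by linarith
  set c : ℝ≥0∞ := 2 * (B₁ ^ q + 1) / V with hcdef
  have hone : (B₁ ^ q + 1 : ℝ≥0∞) ≠ 0 := by
    simp
  have hnum0 : (2:ℝ≥0∞) * (B₁ ^ q + 1) ≠ 0 := mul_ne_zero (by norm_num) hone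
  have hB1q : (B₁ ^ q : ℝ≥0∞) ≠ ∞ := ENNReal.rpow_ne_top_of_nonneg hq0.le hB₁
  have hnumfin : (2:ℝ≥0∞) * (B₁ ^ q + 1) ≠ ∞ :=
    ENNReal.mul_ne_top (by norm_num) (ENNReal.add_ne_top.2 ⟨hB1q, by norm_num⟩)
  have hc0 : c ≠ 0 := by
    rw [hcdef, ne_eq, ENNReal.div_eq_zero_iff]
    push_neg
    exact ⟨hnum0, hVfin⟩
  have hcfin : c ≠ ∞ := (ENNReal.div_lt_top hnumfin hV0).ne
  have hVc : V / 2 * c = B₁ ^ q + 1 := by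
    have h1 : V / 2 * c = (2 * (B₁ ^ q + 1)) / 2 * (V * V⁻¹) := by
      rw [hcdef]
      simp only [div_eq_mul_inv]
      ring
    rw [h1, ENNReal.mul_inv_cancel hV0 hVfin, mul_one, mul_comm (2:ℝ≥0∞) _,
      mul_div_assoc, ENNReal.div_self (by norm_num) (by norm_num), mul_one]
  set r : ℝ := (1-s)*p - (N:ℝ) with hrdef
  have hrN : -(N:ℝ) < r := by
    rw [hrdef]
    have : 0 < (1-s)*p := mul_pos (by linarith) hp0
    linarith
  set C : ℝ≥0∞ := ∫⁻ z in Metric.ball (0 : Euc N) (D + 1), (‖z‖₊ : ℝ≥0∞) ^ r with hCdef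
  have hCfin : C ≠ ∞ := (lint_rpow_ball hrN _).ne
  have hC : ∀ y ∈ Ω, ∫⁻ x in Ω, ((‖x - y‖₊ : ℝ≥0∞)) ^ r ≤ C := by
    intro y hy
    have hsubΩ : Ω ⊆ Metric.ball y (D + 1) := by
      intro x hx
      rw [Metric.mem_ball]
      exact lt_of_le_of_lt (Metric.dist_le_diam_of_mem hΩb hx hy) (by linarith)
    calc ∫⁻ x in Ω, ((‖x - y‖₊ : ℝ≥0∞)) ^ r
        ≤ ∫⁻ x in Metric.ball y (D + 1), ((‖x - y‖₊ : ℝ≥0∞)) ^ r :=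
          lintegral_mono' (Measure.restrict_mono hsubΩ le_rfl) le_rfl
    _ = C := by
        have hpre : (fun a : Euc N => a + y) ⁻¹' Metric.ball y (D + 1)
            = Metric.ball (0 : Euc N) (D + 1) := by
          ext a
          simp [Metric.mem_ball, dist_eq_norm]
        have htr := (measurePreserving_add_right (volume : Measure (Euc N)) y)
          |>.setLIntegral_comp_preimage_emb (measurableEmbedding_addRight y)
            (fun x => ((‖x - y‖₊ : ℝ≥0∞)) ^ r) (Metric.ball y (D + 1))
        rw [hpre] at htr
        rw [← htr, hCdef]
        apply lintegral_congr
        intro a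
        simp
  set m' : ℝ≥0∞ := ENNReal.ofReal (2 * MA) with hm'def
  have hm'fin : m' ≠ ∞ := ENNReal.ofReal_ne_top
  have hph : ∀ x ∈ Ω, ∀ y ∈ Ω,
      ((‖phase A x y - 1‖₊ : ℝ≥0∞)) ≤ m' * (‖x - y‖₊ : ℝ≥0∞) := by
    intro x hx y hy
    rw [← enorm_eq_nnnorm, ← enorm_eq_nnnorm, ← ofReal_norm, ← ofReal_norm, hm'def,
      ← ENNReal.ofReal_mul (by positivity : (0:ℝ) ≤ 2 * MA)]
    exact ENNReal.ofReal_le_ofReal (phase_sub_one_le hA hx hy)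
  have h2pfin : ((2:ℝ≥0∞) ^ p) ≠ ∞ := ENNReal.rpow_ne_top_of_nonneg hp0.le (by norm_num)
  have hB2pfin : (B₂ ^ p : ℝ≥0∞) ≠ ∞ := ENNReal.rpow_ne_top_of_nonneg hp0.le hB₂
  set K1 : ℝ≥0∞ := (2^p * (d' * B₂^p + c^(p/q) * V * V)) / (V/2) with hK1def
  have hV2ne0 : V / 2 ≠ 0 := by
    rw [ne_eq, ENNReal.div_eq_zero_iff]
    push_neg
    exact ⟨hV0, by norm_num⟩
  have hK1fin : K1 ≠ ∞ := by
    apply (ENNReal.div_lt_top ?_ hV2ne0).ne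
    apply ENNReal.mul_ne_top h2pfin
    apply ENNReal.add_ne_top.2
    constructor
    · exact ENNReal.mul_ne_top hd'fin hB2pfin
    · exact ENNReal.mul_ne_top (ENNReal.mul_ne_top
        (ENNReal.rpow_ne_top_of_nonneg (by positivity) hcfin) hVfin) hVfin
  set K2 : ℝ≥0∞ := 2^p * B₂^p + 2^p * (m'^p * (C * K1)) with hK2def
  have hK2fin : K2 ≠ ∞ := by
    apply ENNReal.add_ne_top.2
    constructor
    · exact ENNReal.mul_ne_top h2pfin hB2pfin
    · exact ENNReal.mul_ne_top h2pfin (ENNReal.mul_ne_top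
        (ENNReal.rpow_ne_top_of_nonneg hp0.le hm'fin)
        (ENNReal.mul_ne_top hCfin hK1fin))
  refine ⟨(K1 + K2) ^ (1/p), ?_, ?_⟩
  · exact ENNReal.rpow_ne_top_of_nonneg (by positivity)
      (ENNReal.add_ne_top.2 ⟨hK1fin, hK2fin⟩)
  intro n
  have hfm := (hf n).1.aestronglyMeasurable
  set g : Euc N → ℂ := hfm.mk (f n) with hgdef
  have hgm : Measurable g := hfm.stronglyMeasurable_mk.measurable
  have hae : f n =ᵐ[volume.restrict Ω] g := hfm.ae_eq_mk
  have hLq : eLpNorm g (ENNReal.ofReal q) (volume.restrict Ω) ≤ B₁ := by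
    rw [← eLpNorm_congr_ae hae]
    exact hbd₁ n
  have hmagg : magSemi A g Ω s p ≤ B₂ := by
    rw [magSemi, ← magJ_congr hae A s p]
    exact hbd₂ n
  have hnormW : normW (f n) Ω s p = normW g Ω s p := by
    rw [normW, normW, eLpNorm_congr_ae hae, gagSemi, gagSemi, magSemi, magSemi,
      magJ_congr hae _ s p]
  have hmagJ : magJ A g (Ω ×ˢ Ω) s p ≤ B₂ ^ p := by
    have h := ENNReal.rpow_le_rpow hmagg hp0.le
    rwa [magSemi, ← ENNReal.rpow_mul, one_div, inv_mul_cancel₀ hp0.ne',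
      ENNReal.rpow_one] at h
  have hT : ∫⁻ x in Ω, (‖g x‖₊ : ℝ≥0∞) ^ q ≤ V / 2 * c := by
    have hQ0 : (ENNReal.ofReal q) ≠ 0 := by
      simp [ENNReal.ofReal_eq_zero, not_le, hq0]
    have heq := eLpNorm_eq_lintegral_rpow_enorm_toReal (f := g) (μ := volume.restrict Ω)
      hQ0 ENNReal.ofReal_ne_top
    rw [ENNReal.toReal_ofReal hq0.le] at heq
    rw [heq] at hLq
    have h := ENNReal.rpow_le_rpow hLq hq0.le
    rw [← ENNReal.rpow_mul, one_div, inv_mul_cancel₀ hq0.ne', ENNReal.rpow_one] at h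
    rw [hVc]
    exact h.trans (self_le_add_right _ _)
  have hIp : ∫⁻ x in Ω, (‖g x‖₊ : ℝ≥0∞) ^ p ≤ K1 :=
    lp_bound hΩm hV0 hVfin A hs0.le hp0 hq0 hd'fin hd' hgm hT hc0 hcfin hmagJ
  have hgag : magJ (fun _ => (0 : Euc N)) g (Ω ×ˢ Ω) s p ≤ K2 :=
    gag_bound hΩm hVfin A hs0.le hp0 hm'fin hCfin hph hC hgm hIp hmagJ
  rw [hnormW, normW]
  apply ENNReal.rpow_le_rpow _ (by positivity)
  apply add_le_add
  · have hP0 : (ENNReal.ofReal p) ≠ 0 := by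
      simp [ENNReal.ofReal_eq_zero, not_le, hp0]
    have heq := eLpNorm_eq_lintegral_rpow_enorm_toReal (f := g) (μ := volume.restrict Ω)
      hP0 ENNReal.ofReal_ne_top
    rw [ENNReal.toReal_ofReal hp0.le] at heq
    rw [heq, ← ENNReal.rpow_mul, one_div, inv_mul_cancel₀ hp0.ne', ENNReal.rpow_one]
    exact hIp
  · rw [gagSemi, magSemi, ← ENNReal.rpow_mul, one_div, inv_mul_cancel₀ hp0.ne',
      ENNReal.rpow_one]
    exact hgag

end
end

section
/- Let N ≥ 1, p, q ≥ 1, s ∈ (0, 1/p). Let Ω = B(0,1) ⊆ ℝ^N, Λ = B(0,1/2), Γ = B(0,1) \ B(0,1/2), and f = χ_Λ the characteristic function of Λ. Then f ∈ W^{s,p}(Ω, ℂ), [f]_{W^{s,p}(Λ)} = 0, [f]_{W^{s,p}(Γ)} = 0, and ‖f‖_{L^q(Ω)} > 0. Consequently, no constant C makes the inequality [f]_{W^{s,p}(Λ)} + C [f]_{W^{s,r}(Γ)} ≥ c ‖f‖_{L^q(Ω)} hold for any c > 0. -/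
open MeasureTheory ENNReal NNReal Set
open Metric
noncomputable section

lemma euc_finrank (N : ℕ) : Module.finrank ℝ (Euc N) = N := by
  simp [finrank_euclideanSpace]

-- tail integrability
lemma tail_int {N : ℕ} (hN : 0 < N) {b : ℝ} (hb : (N : ℝ) < b) :
    ∫⁻ z in (ball (0 : Euc N) (1/2))ᶜ, (‖z‖₊ : ℝ≥0∞) ^ (-b) < ∞ := by
  have hb0 : 0 < b := lt_of_le_of_lt (by positivity) hb
  have hpt : ∀ z ∈ (ball (0 : Euc N) (1/2))ᶜ,
      (‖z‖₊ : ℝ≥0∞) ^ (-b) ≤ ENNReal.ofReal (3 ^ b) * ENNReal.ofReal ((1 + ‖z‖) ^ (-b)) := by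
    intro z hz
    have hz' : (1:ℝ)/2 ≤ ‖z‖ := by
      simpa [mem_ball, dist_eq_norm] using hz
    have hz0 : (0:ℝ) < ‖z‖ := lt_of_lt_of_le (by norm_num) hz'
    have key : (1 + ‖z‖) ^ b ≤ 3 ^ b * ‖z‖ ^ b := by
      rw [← Real.mul_rpow (by norm_num) hz0.le]
      exact Real.rpow_le_rpow (by positivity) (by linarith) hb0.le
    have h1 : (‖z‖₊ : ℝ≥0∞) ^ (-b) = ENNReal.ofReal (‖z‖ ^ (-b)) := by
      rw [← enorm_eq_nnnorm, ← ofReal_norm, ← ENNReal.ofReal_rpow_of_pos hz0]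
    rw [h1, ← ENNReal.ofReal_mul (by positivity)]
    apply ENNReal.ofReal_le_ofReal
    rw [Real.rpow_neg hz0.le, Real.rpow_neg (by positivity : (0:ℝ) ≤ 1 + ‖z‖)]
    have hd : (1:ℝ)/‖z‖^b ≤ 3^b/(1+‖z‖)^b := by
      rw [div_le_div_iff₀ (by positivity) (by positivity), one_mul]
      exact key
    simpa [one_div, div_eq_mul_inv] using hd
  calc ∫⁻ z in (ball (0 : Euc N) (1/2))ᶜ, (‖z‖₊ : ℝ≥0∞) ^ (-b)
      ≤ ∫⁻ z in (ball (0 : Euc N) (1/2))ᶜ,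
          ENNReal.ofReal (3 ^ b) * ENNReal.ofReal ((1 + ‖z‖) ^ (-b)) :=
        setLIntegral_mono' measurableSet_ball.compl hpt
    _ ≤ ∫⁻ z : Euc N, ENNReal.ofReal (3 ^ b) * ENNReal.ofReal ((1 + ‖z‖) ^ (-b)) :=
        lintegral_mono' Measure.restrict_le_self le_rfl
    _ = ENNReal.ofReal (3 ^ b) * ∫⁻ z : Euc N, ENNReal.ofReal ((1 + ‖z‖) ^ (-b)) :=
        lintegral_const_mul' _ _ ofReal_ne_top
    _ < ∞ := by
        apply ENNReal.mul_lt_top ofReal_lt_top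
        apply finite_integral_one_add_norm
        rw [euc_finrank]; exact hb

lemma small_int {N : ℕ} (hN : 0 < N) {a : ℝ} (ha0 : 0 < a) (ha : a < N) :
    ∫⁻ z in ball (0 : Euc N) 1, (‖z‖₊ : ℝ≥0∞) ^ (-a) < ∞ := by
  set μ' := volume.restrict (ball (0 : Euc N) 1) with hμ'
  have hB : volume (ball (0 : Euc N) 1) < ∞ := measure_ball_lt_top
  haveI : Nonempty (Fin N) := Fin.pos_iff_nonempty.mp hN
  have hae : ∀ᵐ z : Euc N ∂μ', (‖z‖₊ : ℝ≥0∞) ^ (-a) = ENNReal.ofReal (‖z‖ ^ (-a)) := by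
    apply ae_restrict_of_ae
    have h0 : (volume : Measure (Euc N)) {(0 : Euc N)} = 0 := measure_singleton 0
    filter_upwards [measure_eq_zero_iff_ae_notMem.mp h0] with z hz
    have hz0 : (0:ℝ) < ‖z‖ := by simpa [norm_pos_iff] using hz
    rw [← enorm_eq_nnnorm, ← ofReal_norm, ← ENNReal.ofReal_rpow_of_pos hz0]
  rw [show (∫⁻ z in ball (0 : Euc N) 1, (‖z‖₊ : ℝ≥0∞) ^ (-a)) = ∫⁻ z, (‖z‖₊ : ℝ≥0∞) ^ (-a) ∂μ'
      from rfl, lintegral_congr_ae hae]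
  rw [lintegral_eq_lintegral_meas_le μ'
    (ae_of_all _ fun z => Real.rpow_nonneg (norm_nonneg z) _)
    (by fun_prop : Measurable fun z : Euc N => ‖z‖ ^ (-a)).aemeasurable]
  have hsplit : ∫⁻ t in Ioi (0:ℝ), μ' {z | t ≤ ‖z‖ ^ (-a)}
      ≤ (∫⁻ t in Ioc (0:ℝ) 1, μ' {z | t ≤ ‖z‖ ^ (-a)})
        + ∫⁻ t in Ioi (1:ℝ), μ' {z | t ≤ ‖z‖ ^ (-a)} :=
    le_trans (lintegral_mono_set Ioi_subset_Ioc_union_Ioi) (lintegral_union_le _ _ _)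
  refine lt_of_le_of_lt hsplit (ENNReal.add_lt_top.2 ⟨?_, ?_⟩)
  · calc ∫⁻ t in Ioc (0:ℝ) 1, μ' {z | t ≤ ‖z‖ ^ (-a)}
        ≤ ∫⁻ _ in Ioc (0:ℝ) 1, volume (ball (0 : Euc N) 1) :=
          setLIntegral_mono' measurableSet_Ioc fun t _ =>
            (measure_mono (subset_univ _)).trans_eq (Measure.restrict_apply_univ _)
      _ = volume (ball (0 : Euc N) 1) * volume (Ioc (0:ℝ) 1) := setLIntegral_const _ _
      _ < ∞ := ENNReal.mul_lt_top hB (by simp [Real.volume_Ioc])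
  · have hbound : ∀ t ∈ Ioi (1:ℝ), μ' {z | t ≤ ‖z‖ ^ (-a)}
        ≤ ENNReal.ofReal (t ^ (-((N:ℝ)/a))) * volume (ball (0 : Euc N) 1) := by
      intro t ht
      have ht1 : (1:ℝ) < t := ht
      have ht0 : (0:ℝ) < t := lt_trans one_pos ht1
      have hsub : {z : Euc N | t ≤ ‖z‖ ^ (-a)} ⊆ closedBall 0 (t ^ (-a⁻¹)) := by
        intro z hz
        simp only [mem_setOf_eq] at hz
        have hz0 : (0:ℝ) < ‖z‖ := by
          rcases eq_or_lt_of_le (norm_nonneg z) with h | h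
          · exfalso
            rw [← h, Real.zero_rpow (neg_ne_zero.mpr ha0.ne')] at hz
            linarith
          · exact h
        have h1 : (‖z‖ ^ (-a)) ^ (-a⁻¹) ≤ t ^ (-a⁻¹) :=
          Real.rpow_le_rpow_of_nonpos ht0 hz (neg_nonpos.mpr (inv_nonneg.mpr ha0.le))
        have h2 : ‖z‖ ≤ t ^ (-a⁻¹) := by
          have heq : (‖z‖ ^ (-a)) ^ (-a⁻¹) = ‖z‖ := by
            rw [← Real.rpow_mul (norm_nonneg z), neg_mul_neg, mul_inv_cancel₀ ha0.ne',
              Real.rpow_one]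
          rwa [heq] at h1
        simpa [mem_closedBall, dist_eq_norm] using h2
      calc μ' {z : Euc N | t ≤ ‖z‖ ^ (-a)} ≤ volume (closedBall (0 : Euc N) (t ^ (-a⁻¹))) :=
            le_trans (Measure.restrict_apply_le _ _) (measure_mono hsub)
        _ = ENNReal.ofReal ((t ^ (-a⁻¹)) ^ Module.finrank ℝ (Euc N)) * volume (ball (0:Euc N) 1) :=
            Measure.addHaar_closedBall _ _ (Real.rpow_nonneg ht0.le _)
        _ = ENNReal.ofReal (t ^ (-((N:ℝ)/a))) * volume (ball (0:Euc N) 1) := by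
            rw [euc_finrank, ← Real.rpow_natCast (t ^ (-a⁻¹)) N, ← Real.rpow_mul ht0.le,
              show -a⁻¹ * (N:ℝ) = -((N:ℝ)/a) by ring]
    calc ∫⁻ t in Ioi (1:ℝ), μ' {z | t ≤ ‖z‖ ^ (-a)}
        ≤ ∫⁻ t in Ioi (1:ℝ), ENNReal.ofReal (t ^ (-((N:ℝ)/a))) * volume (ball (0:Euc N) 1) :=
          setLIntegral_mono' measurableSet_Ioi hbound
      _ = (∫⁻ t in Ioi (1:ℝ), ENNReal.ofReal (t ^ (-((N:ℝ)/a)))) * volume (ball (0:Euc N) 1) :=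
          lintegral_mul_const' _ _ hB.ne
      _ < ∞ := by
          apply ENNReal.mul_lt_top _ hB
          apply IntegrableOn.setLIntegral_lt_top
          apply integrableOn_Ioi_rpow_of_lt _ one_pos
          rw [neg_lt_neg_iff, lt_div_iff₀ ha0, one_mul]
          exact ha

lemma annulus_vol {N : ℕ} (hN : 0 < N) {d : ℝ} (hd0 : 0 ≤ d) (hd : d ≤ 1/2) :
    volume (ball (0:Euc N) (1/2) \ ball (0:Euc N) (1/2 - d))
      ≤ ENNReal.ofReal ((N:ℝ) * d) * volume (ball (0:Euc N) 1) := by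
  haveI : Nonempty (Fin N) := Fin.pos_iff_nonempty.mp hN
  have hNR : (1:ℝ) ≤ N := by exact_mod_cast hN
  have hsub : ball (0:Euc N) (1/2 - d) ⊆ ball (0:Euc N) (1/2) :=
    ball_subset_ball (by linarith)
  rw [measure_diff hsub measurableSet_ball.nullMeasurableSet measure_ball_lt_top.ne,
    Measure.addHaar_ball _ _ (by norm_num : (0:ℝ) ≤ 1/2),
    Measure.addHaar_ball _ _ (by linarith : (0:ℝ) ≤ 1/2 - d), euc_finrank,
    ← ENNReal.sub_mul fun _ _ => measure_ball_lt_top.ne,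
    ← ENNReal.ofReal_sub _ (pow_nonneg (by linarith) N)]
  have hber : 1 - 2*d*(N:ℝ) ≤ (1 - 2*d)^N := by
    have := one_add_mul_le_pow (by linarith : (-2:ℝ) ≤ -(2*d)) N
    calc 1 - 2*d*(N:ℝ) = 1 + (N:ℝ)*(-(2*d)) := by ring
      _ ≤ (1 + -(2*d))^N := this
      _ = (1 - 2*d)^N := by ring_nf
  have hpow : ((1:ℝ)/2)^N ≤ 1/2 := by
    calc ((1:ℝ)/2)^N ≤ ((1:ℝ)/2)^1 := pow_le_pow_of_le_one (by norm_num) (by norm_num) hN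
      _ = 1/2 := pow_one _
  have hreal : ((1:ℝ)/2)^N - (1/2 - d)^N ≤ (N:ℝ)*d := by
    have h1 : ((1:ℝ)/2 - d) = (1/2)*(1 - 2*d) := by ring
    rw [h1, mul_pow]
    have h2 : ((1:ℝ)/2)^N - ((1:ℝ)/2)^N * (1-2*d)^N = ((1:ℝ)/2)^N * (1 - (1-2*d)^N) := by ring
    rw [h2]
    have h3 : (1:ℝ) - (1-2*d)^N ≤ 2*d*(N:ℝ) := by linarith
    have h4 : (0:ℝ) ≤ 1 - (1-2*d)^N := by
      have : ((1:ℝ)-2*d)^N ≤ 1 := by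
        apply pow_le_one₀ (by linarith) (by linarith)
      linarith
    calc ((1:ℝ)/2)^N * (1 - (1-2*d)^N) ≤ (1/2) * (2*d*(N:ℝ)) := by
          apply mul_le_mul hpow h3 h4 (by norm_num)
      _ = (N:ℝ)*d := by ring
  exact mul_le_mul_left (ENNReal.ofReal_le_ofReal hreal) _


/-- the characteristic function of the half ball as a counterexample to the
naive nonlocal punctured-domain Poincaré inequality. -/
theorem stmt_12 {N : ℕ} (hN : 0 < N) (p q s : ℝ) (hp : 1 ≤ p) (hq : 1 ≤ q)
    (hs0 : 0 < s) (hs : s < 1 / p) :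
    let Ω : Set (Euc N) := Metric.ball 0 1
    let Λ : Set (Euc N) := Metric.ball 0 (1/2)
    let Γ : Set (Euc N) := Metric.ball 0 1 \ Metric.ball 0 (1/2)
    let f : Euc N → ℂ := Λ.indicator fun _ => (1 : ℂ)
    memW f Ω s p ∧ gagSemi f Λ s p = 0 ∧ gagSemi f Γ s p = 0 ∧
      eLpNorm f (ENNReal.ofReal q) (volume.restrict Ω) ≠ 0 ∧
      ∀ C c r : ℝ, 1 ≤ r → 0 < c →
        ¬ (ENNReal.ofReal c * eLpNorm f (ENNReal.ofReal q) (volume.restrict Ω) ≤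
            gagSemi f Λ s p + ENNReal.ofReal C * gagSemi f Γ s r) := by
  intro Ω Λ Γ f
  have hNR : (1:ℝ) ≤ N := by exact_mod_cast hN
  have hp0 : (0:ℝ) < p := lt_of_lt_of_le one_pos hp
  have hsp0 : 0 < s * p := mul_pos hs0 hp0
  have hsp1 : s * p < 1 := by
    calc s * p < (1/p) * p := mul_lt_mul_of_pos_right hs hp0
      _ = 1 := by field_simp
  have hΛm : MeasurableSet Λ := measurableSet_ball
  have hΛΩ : Λ ⊆ Ω := ball_subset_ball (by norm_num)
  have hphase : ∀ x y : Euc N, phase (fun _ => (0:Euc N)) x y = 1 := by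
    intro x y
    simp [phase]
  have hfval : ∀ {x : Euc N}, x ∈ Λ → f x = 1 := fun hx => Set.indicator_of_mem hx _
  have hfval' : ∀ {x : Euc N}, x ∉ Λ → f x = 0 := fun hx => Set.indicator_of_notMem hx _
  -- zero seminorms on sets where f is constant
  have hzero : ∀ (S : Set (Euc N)) (r' : ℝ), 0 < r' → MeasurableSet S →
      (∀ z : Euc N × Euc N, z ∈ S ×ˢ S → f z.1 - f z.2 = 0) →
      gagSemi f S s r' = 0 := by
    intro S r' hr' hSm hS
    have hJ : magJ (fun _ => (0:Euc N)) f (S ×ˢ S) s r' = 0 := by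
      simp only [magJ]
      have hcong : ∀ᵐ z : Euc N × Euc N ∂volume, z ∈ S ×ˢ S →
          (‖mdiff (fun _ => (0:Euc N)) f z.1 z.2‖₊ : ℝ≥0∞) ^ r'
            / (‖z.1 - z.2‖₊ : ℝ≥0∞) ^ ((N:ℝ) + s * r') = 0 := by
        refine ae_of_all _ fun z hz => ?_
        rw [mdiff, hphase, one_mul, hS z hz]
        simp [ENNReal.zero_rpow_of_pos hr']
      rw [setLIntegral_congr_fun_ae (hSm.prod hSm) hcong, lintegral_zero]
    rw [gagSemi, magSemi, hJ, ENNReal.zero_rpow_of_pos (by positivity)]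
  have hzeroΛ : ∀ r' : ℝ, 0 < r' → gagSemi f Λ s r' = 0 := fun r' hr' =>
    hzero Λ r' hr' hΛm fun z hz => by rw [hfval hz.1, hfval hz.2, sub_self]
  have hzeroΓ : ∀ r' : ℝ, 0 < r' → gagSemi f Γ s r' = 0 := fun r' hr' =>
    hzero Γ r' hr' (measurableSet_ball.diff measurableSet_ball)
      fun z hz => by rw [hfval' hz.1.2, hfval' hz.2.2, sub_self]
  -- nonvanishing L^q norm
  have hfm : AEStronglyMeasurable f (volume.restrict Ω) :=
    (measurable_const.indicator hΛm).aestronglyMeasurable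
  have hq0 : ENNReal.ofReal q ≠ 0 := by
    simp only [ne_eq, ENNReal.ofReal_eq_zero, not_le]
    linarith
  have hLq : eLpNorm f (ENNReal.ofReal q) (volume.restrict Ω) ≠ 0 := by
    rw [ne_eq, eLpNorm_eq_zero_iff hfm hq0]
    intro hae
    have hset : {x : Euc N | f x ≠ 0} = Λ := by
      ext x
      by_cases hx : x ∈ Λ
      · simp [hfval hx, hx]
      · simp [hfval' hx, hx]
    have h0 : (volume.restrict Ω) Λ = 0 := by
      rw [← hset]
      exact hae
    rw [Measure.restrict_apply hΛm, Set.inter_eq_self_of_subset_left hΛΩ] at h0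
    exact absurd h0 (Metric.measure_ball_pos volume 0 (by norm_num)).ne'
  -- finiteness of the Gagliardo double integral over Ω
  have hfin : magJ (fun _ => (0:Euc N)) f (Ω ×ˢ Ω) s p < ∞ := by
    haveI : Nonempty (Fin N) := Fin.pos_iff_nonempty.mp hN
    set w : Euc N → ℝ≥0∞ := fun u => (‖u‖₊ : ℝ≥0∞) ^ (-((N:ℝ) + s * p)) with hw
    have hwmeas : Measurable w := by fun_prop
    set h : Euc N × Euc N → ℝ≥0∞ := fun z =>
      Λ.indicator (fun _ => (1:ℝ≥0∞)) z.1 *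
        (Λᶜ.indicator (fun _ => (1:ℝ≥0∞)) z.2 * w (z.1 - z.2)) with hh
    have hhmeas : Measurable h := by
      apply Measurable.mul
      · exact (measurable_const.indicator hΛm).comp measurable_fst
      · exact ((measurable_const.indicator hΛm.compl).comp measurable_snd).mul
          (hwmeas.comp (measurable_fst.sub measurable_snd))
    have hweq : ∀ u : Euc N, w u = 1 / (‖u‖₊ : ℝ≥0∞) ^ ((N:ℝ) + s * p) := by
      intro u
      show (‖u‖₊ : ℝ≥0∞) ^ (-((N:ℝ) + s * p)) = 1 / (‖u‖₊ : ℝ≥0∞) ^ ((N:ℝ) + s * p)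
      rw [ENNReal.rpow_neg, one_div]
    have hg : ∀ z : Euc N × Euc N,
        (‖mdiff (fun _ => (0:Euc N)) f z.1 z.2‖₊ : ℝ≥0∞) ^ p
          / (‖z.1 - z.2‖₊ : ℝ≥0∞) ^ ((N:ℝ) + s * p) ≤ h z + h z.swap := by
      intro z
      rw [mdiff, hphase, one_mul]
      by_cases h1 : z.1 ∈ Λ <;> by_cases h2 : z.2 ∈ Λ
      · rw [hfval h1, hfval h2, sub_self]
        simp [ENNReal.zero_rpow_of_pos hp0]
      · rw [hfval h1, hfval' h2, sub_zero]
        have h2' : z.2 ∈ Λᶜ := h2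
        have hhz : h z = w (z.1 - z.2) := by
          rw [hh]
          simp [Set.indicator_of_mem h1, Set.indicator_of_mem h2']
        have : (‖(1:ℂ)‖₊ : ℝ≥0∞) ^ p = 1 := by simp
        rw [this, ← hweq, ← hhz]
        exact le_self_add
      · rw [hfval' h1, hfval h2, zero_sub]
        have h1' : z.1 ∈ Λᶜ := h1
        have hhz : h z.swap = w (z.2 - z.1) := by
          rw [hh]
          simp [Set.indicator_of_mem h2, Set.indicator_of_mem h1']
        have hn : (‖-(1:ℂ)‖₊ : ℝ≥0∞) ^ p = 1 := by simp
        rw [hn]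
        have hrev : (‖z.1 - z.2‖₊ : ℝ≥0∞) = (‖z.2 - z.1‖₊ : ℝ≥0∞) := by
          rw [← nnnorm_neg, neg_sub]
        rw [hrev, ← hweq, ← hhz]
        exact le_add_self
      · rw [hfval' h1, hfval' h2, sub_self]
        simp [ENNReal.zero_rpow_of_pos hp0]
    have hswap : (∫⁻ z : Euc N × Euc N, h z.swap) = ∫⁻ z : Euc N × Euc N, h z := by
      rw [Measure.volume_eq_prod]
      exact (Measure.measurePreserving_swap).lintegral_comp hhmeas
    set T : Euc N → Set (Euc N) := fun u => Λ ∩ (fun x => x - u) ⁻¹' Λᶜ with hT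
    have hTm : ∀ u, MeasurableSet (T u) := fun u =>
      hΛm.inter ((measurable_sub_const u) hΛm.compl)
    have hK : (∫⁻ z : Euc N × Euc N, h z) = ∫⁻ u : Euc N, w u * volume (T u) := by
      rw [Measure.volume_eq_prod, lintegral_prod _ hhmeas.aemeasurable]
      have inner1 : ∀ x : Euc N, (∫⁻ y : Euc N, h (x, y)) =
          ∫⁻ u : Euc N, Λ.indicator (fun _ => (1:ℝ≥0∞)) x *
            (Λᶜ.indicator (fun _ => (1:ℝ≥0∞)) (x - u) * w u) := by
        intro x
        have hind_ne : Λ.indicator (fun _ => (1:ℝ≥0∞)) x ≠ ∞ := by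
          by_cases hx : x ∈ Λ <;> simp [hx]
        rw [lintegral_const_mul' _ _ hind_ne, lintegral_const_mul' _ _ hind_ne]
        congr 1
        have hFm : Measurable fun y : Euc N =>
            Λᶜ.indicator (fun _ => (1:ℝ≥0∞)) y * w (x - y) :=
          (measurable_const.indicator hΛm.compl).mul
            (hwmeas.comp (measurable_const.sub measurable_id))
        have hmp := (Measure.measurePreserving_sub_left (volume : Measure (Euc N)) x).lintegral_comp hFm
        rw [← hmp]
        refine lintegral_congr fun u => ?_
        simp [_root_.sub_sub_cancel]
      rw [lintegral_congr inner1, lintegral_lintegral_swap (by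
        apply Measurable.aemeasurable
        apply Measurable.mul
        · exact (measurable_const.indicator hΛm).comp measurable_fst
        · exact ((measurable_const.indicator hΛm.compl).comp
            (measurable_fst.sub measurable_snd)).mul (hwmeas.comp measurable_snd))]
      refine lintegral_congr fun u => ?_
      have hpt : ∀ x : Euc N, Λ.indicator (fun _ => (1:ℝ≥0∞)) x *
          (Λᶜ.indicator (fun _ => (1:ℝ≥0∞)) (x - u) * w u)
          = (T u).indicator (fun _ => w u) x := by
        intro x
        by_cases h1 : x ∈ Λ <;> by_cases h2 : x - u ∈ Λᶜ
        · rw [Set.indicator_of_mem h1, Set.indicator_of_mem h2,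
            Set.indicator_of_mem (show x ∈ T u from ⟨h1, h2⟩), one_mul, one_mul]
        · rw [Set.indicator_of_notMem h2,
            Set.indicator_of_notMem (show x ∉ T u from fun hm => h2 hm.2), zero_mul, mul_zero]
        · rw [Set.indicator_of_notMem h1,
            Set.indicator_of_notMem (show x ∉ T u from fun hm => h1 hm.1), zero_mul]
        · rw [Set.indicator_of_notMem h1,
            Set.indicator_of_notMem (show x ∉ T u from fun hm => h1 hm.1), zero_mul]
      rw [lintegral_congr hpt, lintegral_indicator_const (hTm u)]
    have hwnn : ∀ u : Euc N, w u * (‖u‖₊ : ℝ≥0∞) ≤ (‖u‖₊ : ℝ≥0∞) ^ (-((N:ℝ) + s*p - 1)) := by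
      intro u
      by_cases hu : ‖u‖₊ = 0
      · rw [hu]
        simp
      · have h0 : (‖u‖₊ : ℝ≥0∞) ≠ 0 := by exact_mod_cast hu
        refine le_of_eq ?_
        rw [show -((N:ℝ) + s*p - 1) = -((N:ℝ)+s*p) + 1 by ring,
          ENNReal.rpow_add _ _ h0 coe_ne_top, ENNReal.rpow_one]
    have key : (∫⁻ u : Euc N, w u * volume (T u)) < ∞ := by
      rw [← lintegral_add_compl (fun u => w u * volume (T u))
        (measurableSet_ball : MeasurableSet (ball (0:Euc N) (1/2)))]
      refine ENNReal.add_lt_top.2 ⟨?_, ?_⟩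
      · have hb1 : ∀ u ∈ ball (0:Euc N) (1/2), w u * volume (T u) ≤
            (ENNReal.ofReal (N:ℝ) * volume (ball (0:Euc N) 1)) *
              ((‖u‖₊ : ℝ≥0∞) ^ (-((N:ℝ) + s*p - 1))) := by
          intro u hu
          have hu' : ‖u‖ < 1/2 := mem_ball_zero_iff.mp hu
          have hsubT : T u ⊆ ball (0:Euc N) (1/2) \ ball (0:Euc N) (1/2 - ‖u‖) := by
            rintro x ⟨hx1, hx2⟩
            have hx1' : ‖x‖ < 1/2 := mem_ball_zero_iff.mp hx1
            have hx2' : ¬ ‖x - u‖ < 1/2 := fun hlt => hx2 (mem_ball_zero_iff.mpr hlt)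
            push_neg at hx2'
            refine ⟨hx1, fun hmem => ?_⟩
            have hlt : ‖x‖ < 1/2 - ‖u‖ := mem_ball_zero_iff.mp hmem
            have htri : ‖x - u‖ ≤ ‖x‖ + ‖u‖ := norm_sub_le x u
            linarith
          have hvol : volume (T u) ≤ ENNReal.ofReal ((N:ℝ) * ‖u‖) * volume (ball (0:Euc N) 1) :=
            le_trans (measure_mono hsubT) (annulus_vol hN (norm_nonneg u) hu'.le)
          calc w u * volume (T u)
              ≤ w u * (ENNReal.ofReal ((N:ℝ) * ‖u‖) * volume (ball (0:Euc N) 1)) :=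
                mul_le_mul_right hvol _
            _ = (ENNReal.ofReal (N:ℝ) * volume (ball (0:Euc N) 1)) * (w u * (‖u‖₊ : ℝ≥0∞)) := by
                rw [ENNReal.ofReal_mul (Nat.cast_nonneg N), ofReal_norm, enorm_eq_nnnorm]
                ring
            _ ≤ _ := mul_le_mul_right (hwnn u) _
        calc ∫⁻ u in ball (0:Euc N) (1/2), w u * volume (T u)
            ≤ ∫⁻ u in ball (0:Euc N) (1/2),
                (ENNReal.ofReal (N:ℝ) * volume (ball (0:Euc N) 1)) *
                  ((‖u‖₊ : ℝ≥0∞) ^ (-((N:ℝ) + s*p - 1))) :=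
              setLIntegral_mono' measurableSet_ball hb1
          _ = (ENNReal.ofReal (N:ℝ) * volume (ball (0:Euc N) 1)) *
                ∫⁻ u in ball (0:Euc N) (1/2), (‖u‖₊ : ℝ≥0∞) ^ (-((N:ℝ) + s*p - 1)) :=
              lintegral_const_mul' _ _ (ENNReal.mul_ne_top ofReal_ne_top measure_ball_lt_top.ne)
          _ ≤ (ENNReal.ofReal (N:ℝ) * volume (ball (0:Euc N) 1)) *
                ∫⁻ u in ball (0:Euc N) 1, (‖u‖₊ : ℝ≥0∞) ^ (-((N:ℝ) + s*p - 1)) :=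
              mul_le_mul_right (lintegral_mono_set (ball_subset_ball (by norm_num))) _
          _ < ∞ := ENNReal.mul_lt_top (ENNReal.mul_lt_top ofReal_lt_top measure_ball_lt_top)
              (small_int hN (by linarith) (by linarith))
      · calc ∫⁻ u in (ball (0:Euc N) (1/2))ᶜ, w u * volume (T u)
            ≤ ∫⁻ u in (ball (0:Euc N) (1/2))ᶜ, w u * volume Λ :=
              setLIntegral_mono' measurableSet_ball.compl fun u _ =>
                mul_le_mul_right (measure_mono Set.inter_subset_left) _
          _ = (∫⁻ u in (ball (0:Euc N) (1/2))ᶜ, w u) * volume Λ :=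
              lintegral_mul_const' _ _ measure_ball_lt_top.ne
          _ < ∞ := ENNReal.mul_lt_top (tail_int hN (by linarith)) measure_ball_lt_top
    simp only [magJ]
    calc ∫⁻ z : Euc N × Euc N in Ω ×ˢ Ω,
          (‖mdiff (fun _ => (0:Euc N)) f z.1 z.2‖₊ : ℝ≥0∞) ^ p
            / (‖z.1 - z.2‖₊ : ℝ≥0∞) ^ ((N:ℝ) + s * p)
        ≤ ∫⁻ z : Euc N × Euc N, (‖mdiff (fun _ => (0:Euc N)) f z.1 z.2‖₊ : ℝ≥0∞) ^ p
            / (‖z.1 - z.2‖₊ : ℝ≥0∞) ^ ((N:ℝ) + s * p) := setLIntegral_le_lintegral _ _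
      _ ≤ ∫⁻ z : Euc N × Euc N, (h z + h z.swap) := lintegral_mono hg
      _ = (∫⁻ z : Euc N × Euc N, h z) + ∫⁻ z : Euc N × Euc N, h z.swap :=
          lintegral_add_left hhmeas _
      _ = 2 * ∫⁻ u : Euc N, w u * volume (T u) := by rw [hswap, hK, two_mul]
      _ < ∞ := ENNReal.mul_lt_top (lt_top_iff_ne_top.mpr ENNReal.ofNat_ne_top) key
  refine ⟨⟨?_, ?_⟩, hzeroΛ p hp0, hzeroΓ p hp0, hLq, ?_⟩
  · exact memLp_indicator_const _ hΛm 1 (Or.inr (by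
      rw [Measure.restrict_apply hΛm]
      exact ((measure_mono Set.inter_subset_right).trans_lt measure_ball_lt_top).ne))
  · rw [gagSemi, magSemi]
    exact ENNReal.rpow_lt_top_of_nonneg (by positivity) hfin.ne
  · intro C c r hr hc hle
    rw [hzeroΛ p hp0, hzeroΓ r (by linarith), mul_zero, add_zero] at hle
    have h0 : ENNReal.ofReal c * eLpNorm f (ENNReal.ofReal q) (volume.restrict Ω) = 0 :=
      le_antisymm hle (zero_le ..)
    rcases mul_eq_zero.mp h0 with h | h
    · rw [ENNReal.ofReal_eq_zero] at h
      linarith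
    · exact hLq h

end
end
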